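/- arXiv:1703.01483 — 4 statements merged into one kernel-verified Lean document; each statement's English description precedes it below -/
import Mathlib

section
/- Let G be a simple graph, let d, f, r, s be positive integers, let g be a nonnegative integer, and let e be 0 or 1. Suppose there exist G designs of orders f·d·r·s + e and g·d·s + e, and suppose there exists a decomposition of the complete bipartite graph K_{dr,ds} into G. Then for every integer t ≥ 0 there exists a G design of order t·f·d·r·s + g·d·s + e. -/
open SimpleGraph

/-- `K.DecomposesInto G`: a decomposition of `K` into `G`, i.e. a partition of the
edge set of `K` into the edge sets of subgraphs of `K`, each isomorphic to `G`. -/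
def SimpleGraph.DecomposesInto {V : Type*} {W : Type*} (K : SimpleGraph V)
    (G : SimpleGraph W) : Prop :=
  ∃ (ι : Type) (f : ι → K.Subgraph),
    (∀ i, Nonempty (G ≃g (f i).coe)) ∧
    ∀ e ∈ K.edgeSet, ∃! i, e ∈ (f i).edgeSet

/-- A `G` design of order `n`: a decomposition of the complete graph `K_n` on `n`
vertices into `G`. -/
def SimpleGraph.HasDesign {W : Type*} (G : SimpleGraph W) (n : ℕ) : Prop :=
  (⊤ : SimpleGraph (Fin n)).DecomposesInto G

/-- The complete multipartite graph with parts of sizes `m 0, …, m (k-1)`. -/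
def completeMultipartite {k : ℕ} (m : Fin k → ℕ) :
    SimpleGraph ((i : Fin k) × Fin (m i)) :=
  SimpleGraph.completeMultipartiteGraph fun i => Fin (m i)

/-- The set of edges joining consecutive entries of a list of vertices. -/
def consecEdges (l : List ℕ) : Set (Sym2 ℕ) :=
  {e | ∃ p ∈ l.zip l.tail, e = s(p.1, p.2)}

/-- The vertex list of a path of length `len` from vertex `0` to vertex `1` whose
internal vertices are `start, start + 1, …, start + len - 2`. -/
def thetaPath (len start : ℕ) : List ℕ :=
  0 :: ((List.range (len - 1)).map (· + start) ++ [1])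

/-- The theta graph `Θ(a,b,c)` on the vertex set `Fin (a+b+c-1)`: the two vertices
`0` and `1` of degree `3` are joined by three internally disjoint paths, of lengths
`a`, `b` and `c`, whose internal vertices are `2, …, a`, resp. `a+1, …, a+b-1`,
resp. `a+b, …, a+b+c-2`. -/
def thetaGraph (a b c : ℕ) : SimpleGraph (Fin (a + b + c - 1)) :=
  (SimpleGraph.fromEdgeSet
    (consecEdges (thetaPath a 2) ∪ consecEdges (thetaPath b (a + 1)) ∪
      consecEdges (thetaPath c (a + b)))).comap Fin.val

section copies
variable {V W X : Type*} {K : SimpleGraph V} {G : SimpleGraph W}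

/-- copies data: a family of injective maps realizing `G` inside `K`, whose edge images
partition the edge set of `K`. -/
def IsCopies (K : SimpleGraph V) (G : SimpleGraph W) {ι : Type} (m : ι → W → V) : Prop :=
  (∀ i, Function.Injective (m i)) ∧
  (∀ i a b, G.Adj a b → K.Adj (m i a) (m i b)) ∧
  (∀ e ∈ K.edgeSet, ∃! i, e ∈ Sym2.map (m i) '' G.edgeSet)

lemma unpack_mem_map {α β : Type*} {f : α → β} {S : Set (Sym2 α)} {e0 : Sym2 β}
    (h : e0 ∈ Sym2.map f '' S) : ∃ u v, s(u, v) ∈ S ∧ e0 = s(f u, f v) := by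
  obtain ⟨e', he', rfl⟩ := h
  induction e' using Sym2.ind with
  | _ u v => exact ⟨u, v, he', by rw [Sym2.map_pair_eq]⟩

lemma mem_map_image_pair {α β : Type*} {f : α → β} {S : Set (Sym2 α)} {u v : α}
    (h : s(u, v) ∈ S) : s(f u, f v) ∈ Sym2.map f '' S :=
  ⟨s(u, v), h, Sym2.map_pair_eq f u v⟩

lemma IsCopies.edge_image_subset {ι : Type} {m : ι → W → V} (h : IsCopies K G m) (i : ι) :
    Sym2.map (m i) '' G.edgeSet ⊆ K.edgeSet := by
  intro e he
  obtain ⟨u, v, huv, rfl⟩ := unpack_mem_map he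
  exact (h.2.1 i u v huv)

lemma IsCopies.decomposesInto {ι : Type} {m : ι → W → V} (h : IsCopies K G m) :
    K.DecomposesInto G := by
  obtain ⟨hinj, hadj, huniq⟩ := h
  refine ⟨ι, fun i => {
    verts := Set.range (m i)
    Adj := fun x y => ∃ a b, G.Adj a b ∧ m i a = x ∧ m i b = y
    adj_sub := by rintro x y ⟨a, b, hab, rfl, rfl⟩; exact hadj i a b hab
    edge_vert := by rintro x y ⟨a, b, hab, rfl, rfl⟩; exact ⟨a, rfl⟩
    symm := ⟨by rintro x y ⟨a, b, hab, rfl, rfl⟩; exact ⟨b, a, hab.symm, rfl, rfl⟩⟩ }, ?_, ?_⟩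
  · intro i
    refine ⟨⟨Equiv.ofInjective (m i) (hinj i), ?_⟩⟩
    intro a b
    constructor
    · rintro ⟨a', b', hab, ha, hb⟩
      rw [hinj i ha, hinj i hb] at hab; exact hab
    · intro hab; exact ⟨a, b, hab, rfl, rfl⟩
  · intro e he
    obtain ⟨i, hi, hiu⟩ := huniq e he
    have key : ∀ i : ι, (e ∈ Subgraph.edgeSet {
        verts := Set.range (m i)
        Adj := fun x y => ∃ a b, G.Adj a b ∧ m i a = x ∧ m i b = y
        adj_sub := by rintro x y ⟨a, b, hab, rfl, rfl⟩; exact hadj i a b hab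
        edge_vert := by rintro x y ⟨a, b, hab, rfl, rfl⟩; exact ⟨a, rfl⟩
        symm := ⟨by rintro x y ⟨a, b, hab, rfl, rfl⟩; exact ⟨b, a, hab.symm, rfl, rfl⟩⟩ }) ↔
        e ∈ Sym2.map (m i) '' G.edgeSet := by
      intro i
      induction e using Sym2.ind with
      | _ x y =>
        rw [Subgraph.mem_edgeSet]
        constructor
        · rintro ⟨a, b, hab, rfl, rfl⟩; exact mem_map_image_pair hab
        · intro hmem
          obtain ⟨u, v, huv, heq⟩ := unpack_mem_map hmem
          rw [Sym2.eq_iff] at heq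
          rcases heq with ⟨hx, hy⟩ | ⟨hx, hy⟩
          · exact ⟨u, v, huv, hx.symm, hy.symm⟩
          · exact ⟨v, u, ((SimpleGraph.mem_edgeSet G).mp huv).symm, hx.symm, hy.symm⟩
    exact ⟨i, (key i).mpr hi, fun j hj => hiu j ((key j).mp hj)⟩

lemma SimpleGraph.DecomposesInto.exists_isCopies (h : K.DecomposesInto G) :
    ∃ (ι : Type) (m : ι → W → V), IsCopies K G m := by
  obtain ⟨ι, f, hiso, huniq⟩ := h
  have iso : ∀ i, G ≃g (f i).coe := fun i => (hiso i).some
  refine ⟨ι, fun i w => ((iso i) w : V), ?_, ?_, ?_⟩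
  · intro i a b hab
    exact (iso i).toEquiv.injective (Subtype.val_injective hab)
  · intro i a b hab
    exact ((f i).adj_sub (((iso i).map_rel_iff.mpr hab) : (f i).coe.Adj _ _))
  · intro e he
    have key : ∀ i, e ∈ (f i).edgeSet ↔ e ∈ Sym2.map (fun w => ((iso i) w : V)) '' G.edgeSet := by
      intro i
      induction e using Sym2.ind with
      | _ x y =>
        rw [Subgraph.mem_edgeSet]
        constructor
        · intro hxy
          have hx : x ∈ (f i).verts := hxy.fst_mem
          have hy : y ∈ (f i).verts := hxy.snd_mem
          have hco : (f i).coe.Adj ⟨x, hx⟩ ⟨y, hy⟩ := hxy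
          have hG : G.Adj ((iso i).symm ⟨x, hx⟩) ((iso i).symm ⟨y, hy⟩) := by
            rw [← (iso i).map_rel_iff]; simpa using hco
          refine ⟨s(_, _), hG, ?_⟩
          rw [Sym2.map_pair_eq]
          simp
        · intro hmem
          obtain ⟨u, v, huv, heq⟩ := unpack_mem_map hmem
          have : (f i).coe.Adj ((iso i) u) ((iso i) v) :=
            (iso i).map_rel_iff.mpr ((SimpleGraph.mem_edgeSet G).mp huv)
          have h2 : (f i).Adj (((iso i) u : V)) (((iso i) v : V)) := this
          rw [Sym2.eq_iff] at heq
          rcases heq with ⟨hx, hy⟩ | ⟨hx, hy⟩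
          · rw [hx, hy]; exact h2
          · rw [hx, hy]; exact h2.symm
    obtain ⟨i, hi, hiu⟩ := huniq e he
    exact ⟨i, (key i).mp hi, fun j hj => hiu j ((key j).mpr hj)⟩

end copies

section more
variable {V W X V' : Type*} {K : SimpleGraph V} {K' : SimpleGraph V'}
  {H : SimpleGraph W} {G : SimpleGraph X}

lemma SimpleGraph.DecomposesInto.trans (h1 : K.DecomposesInto H) (h2 : H.DecomposesInto G) :
    K.DecomposesInto G := by
  obtain ⟨ι, m, hm⟩ := h1.exists_isCopies
  obtain ⟨κ, n, hn⟩ := h2.exists_isCopies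
  refine IsCopies.decomposesInto (K := K) (G := G) (ι := ι × κ)
    (m := fun p => m p.1 ∘ n p.2) ⟨?_, ?_, ?_⟩
  · exact fun p => (hm.1 p.1).comp (hn.1 p.2)
  · exact fun p a b hab => hm.2.1 p.1 _ _ (hn.2.1 p.2 a b hab)
  · intro e he
    obtain ⟨i, hi, hiu⟩ := hm.2.2 e he
    obtain ⟨u, v, huv, rfl⟩ := unpack_mem_map hi
    obtain ⟨j, hj, hju⟩ := hn.2.2 s(u, v) huv
    obtain ⟨a, b, hab, hpair⟩ := unpack_mem_map hj
    refine ⟨(i, j), ⟨s(a, b), hab, ?_⟩, ?_⟩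
    · rw [← Sym2.map_map, Sym2.map_pair_eq, ← hpair, Sym2.map_pair_eq]
    · rintro ⟨i', j'⟩ hmem
      obtain ⟨a', b', hab', heq⟩ := unpack_mem_map hmem
      have hH : s(n j' a', n j' b') ∈ H.edgeSet :=
        (H.mem_edgeSet).mpr (hn.2.1 j' a' b' ((G.mem_edgeSet).mp hab'))
      have hi' : s(m i u, m i v) ∈ Sym2.map (m i') '' H.edgeSet :=
        ⟨s(n j' a', n j' b'), hH, by rw [Sym2.map_pair_eq]; exact heq.symm⟩
      obtain rfl : i' = i := hiu i' hi'
      have hmapeq : Sym2.map (m i') s(u, v) = Sym2.map (m i') s(n j' a', n j' b') := by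
        rw [Sym2.map_pair_eq, Sym2.map_pair_eq]; exact heq
      have h2 : s(u, v) = s(n j' a', n j' b') := Sym2.map.injective (hm.1 i') hmapeq
      obtain rfl : j' = j := hju j' (h2 ▸ mem_map_image_pair hab')
      rfl

lemma SimpleGraph.Iso.decomposesInto (φ : K ≃g K') : K.DecomposesInto K' := by
  refine IsCopies.decomposesInto (K := K) (G := K') (ι := PUnit)
    (m := fun _ => φ.symm) ⟨?_, ?_, ?_⟩
  · exact fun _ => φ.symm.toEquiv.injective
  · exact fun _ a b hab => φ.symm.map_rel_iff.mpr hab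
  · intro e he
    refine ⟨PUnit.unit, ⟨Sym2.map φ e, ?_, ?_⟩, fun _ _ => rfl⟩
    · induction e using Sym2.ind with
      | _ x y =>
        rw [Sym2.map_pair_eq, K'.mem_edgeSet]
        exact φ.map_rel_iff.mpr ((K.mem_edgeSet).mp he)
    · rw [Sym2.map_map]
      have : (⇑φ.symm ∘ ⇑φ) = id := by funext z; simp
      rw [this, Sym2.map_id]; rfl

lemma top_decomposesInto_of_hasDesign {α : Type*} [Fintype α] {n : ℕ}
    (hcard : Fintype.card α = n) (h : G.HasDesign n) :
    (⊤ : SimpleGraph α).DecomposesInto G :=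
  ((Iso.completeGraph (Fintype.equivFinOfCardEq hcard)).decomposesInto).trans h

lemma hasDesign_of_top_decomposesInto {α : Type*} [Fintype α] {n : ℕ}
    (hcard : Fintype.card α = n) (h : (⊤ : SimpleGraph α).DecomposesInto G) :
    G.HasDesign n :=
  ((Iso.completeGraph (Fintype.equivFinOfCardEq hcard).symm).decomposesInto).trans h

end more

section blowup

def completeBipartite_iso {A B A' B' : Type*} (e1 : A ≃ A') (e2 : B ≃ B') :
    completeBipartiteGraph A B ≃g completeBipartiteGraph A' B' := by
  refine ⟨Equiv.sumCongr e1 e2, ?_⟩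
  rintro (x | x) (y | y) <;> simp [completeBipartiteGraph]

lemma blowup (m n p q : ℕ) :
    (completeBipartiteGraph (Fin (m * p)) (Fin (n * q))).DecomposesInto
      (completeBipartiteGraph (Fin p) (Fin q)) := by
  have φ := completeBipartite_iso (finProdFinEquiv (m := m) (n := p)).symm
    (finProdFinEquiv (m := n) (n := q)).symm
  refine φ.decomposesInto.trans ?_
  refine IsCopies.decomposesInto (ι := Fin m × Fin n)
    (m := fun ij => Sum.map (fun x => (ij.1, x)) (fun y => (ij.2, y))) ⟨?_, ?_, ?_⟩
  · rintro ⟨i, j⟩ (x | x) (y | y) h <;> simp_all [Sum.map]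
  · rintro ⟨i, j⟩ (x | x) (y | y) h <;> simp_all [completeBipartiteGraph, Sum.map]
  · intro e he
    induction e using Sym2.ind with
    | _ x y =>
      have key : ∀ (i : Fin m) (u : Fin p) (j : Fin n) (v : Fin q),
          ∃! ij : Fin m × Fin n,
            s((Sum.inl (i, u) : (Fin m × Fin p) ⊕ (Fin n × Fin q)), Sum.inr (j, v)) ∈
              Sym2.map (Sum.map (fun x => (ij.1, x)) (fun y => (ij.2, y))) ''
                (completeBipartiteGraph (Fin p) (Fin q)).edgeSet := by
        intro i u j v
        refine ⟨(i, j), ⟨s(Sum.inl u, Sum.inr v), by simp [completeBipartiteGraph], by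
          rw [Sym2.map_pair_eq]; rfl⟩, ?_⟩
        rintro ⟨i', j'⟩ hmem
        obtain ⟨g1, g2, hg, heq⟩ := unpack_mem_map hmem
        rcases g1 with u' | v' <;> rcases g2 with u' | v' <;>
          simp only [SimpleGraph.mem_edgeSet, completeBipartiteGraph] at hg <;>
          simp_all [Sym2.eq_iff, Sum.map, Prod.ext_iff]
      rw [SimpleGraph.mem_edgeSet] at he
      rcases x with ⟨i, u⟩ | ⟨j, v⟩ <;> rcases y with ⟨i', u'⟩ | ⟨j', v'⟩
      · simp [completeBipartiteGraph] at he
      · exact key i u j' v'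
      · rw [Sym2.eq_swap]; exact key i' u' j v
      · simp [completeBipartiteGraph] at he
    
end blowup

section step
variable {X : Type*}

lemma step_lemma (G : SimpleGraph X) (a b e : ℕ) (he : e ≤ 1)
    (h1 : G.HasDesign (a + e)) (h2 : G.HasDesign (b + e))
    (h3 : (completeBipartiteGraph (Fin a) (Fin b)).DecomposesInto G) :
    G.HasDesign (a + b + e) := by
  classical
  have hE : ∀ c c' : Fin e, c = c' := by
    intro c c'; have := c.isLt; have := c'.isLt; exact Fin.ext (by omega)
  have dA : (⊤ : SimpleGraph (Fin a ⊕ Fin e)).DecomposesInto G :=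
    top_decomposesInto_of_hasDesign (by simp) h1
  have dB : (⊤ : SimpleGraph (Fin b ⊕ Fin e)).DecomposesInto G :=
    top_decomposesInto_of_hasDesign (by simp) h2
  obtain ⟨ι1, m1, hm1⟩ := dA.exists_isCopies
  obtain ⟨ι2, m2, hm2⟩ := dB.exists_isCopies
  obtain ⟨ι3, m3, hm3⟩ := h3.exists_isCopies
  let T : Type := Fin a ⊕ (Fin b ⊕ Fin e)
  let eA : Fin a ⊕ Fin e → T := Sum.map id Sum.inr
  let eB : Fin b ⊕ Fin e → T := Sum.inr
  let eC : Fin a ⊕ Fin b → T := Sum.map id Sum.inl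
  have injA : Function.Injective eA :=
    Function.Injective.sumMap (fun _ _ h => h) Sum.inr_injective
  have injB : Function.Injective eB := fun x y h => Sum.inr_injective h
  have injC : Function.Injective eC :=
    Function.Injective.sumMap (fun _ _ h => h) Sum.inl_injective
  -- exclusion helpers
  have hab' : ∀ (w : Fin a ⊕ Fin e) (w' : Fin b ⊕ Fin e), eA w = eB w' → ∃ c, w = Sum.inr c := by
    rintro (x | c) w' h
    · simp [eA, eB] at h
    · exact ⟨c, rfl⟩
  have hAC : ∀ (w : Fin a ⊕ Fin e) (b1 : Fin b), eA w ≠ eC (Sum.inr b1) := by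
    rintro (x | c) b1 h
    · simp [eA, eC] at h
    · simp [eA, eC] at h
      exact Sum.inr_ne_inl (Sum.inr_injective h)
  have hBC : ∀ (w : Fin b ⊕ Fin e) (a1 : Fin a), eB w ≠ eC (Sum.inl a1) := by
    rintro w a1 h; simp [eB, eC] at h
  have exclAB : ∀ (u v : Fin a ⊕ Fin e) (u' v' : Fin b ⊕ Fin e), u ≠ v →
      s(eA u, eA v) = s(eB u', eB v') → False := by
    intro u v u' v' hne heq
    rcases Sym2.eq_iff.mp heq with ⟨h1, h2⟩ | ⟨h1, h2⟩
    · obtain ⟨c, rfl⟩ := hab' u _ h1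
      obtain ⟨c', rfl⟩ := hab' v _ h2
      exact hne (by rw [hE c c'])
    · obtain ⟨c, rfl⟩ := hab' u _ h1
      obtain ⟨c', rfl⟩ := hab' v _ h2
      exact hne (by rw [hE c c'])
  have bipR : ∀ (u' v' : Fin a ⊕ Fin b), (completeBipartiteGraph (Fin a) (Fin b)).Adj u' v' →
      (∃ b1, u' = Sum.inr b1) ∨ (∃ b1, v' = Sum.inr b1) := by
    rintro (x | b1) (x' | b1') hadj
    · simp [completeBipartiteGraph] at hadj
    · exact Or.inr ⟨b1', rfl⟩
    · exact Or.inl ⟨b1, rfl⟩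
    · exact Or.inl ⟨b1, rfl⟩
  have bipL : ∀ (u' v' : Fin a ⊕ Fin b), (completeBipartiteGraph (Fin a) (Fin b)).Adj u' v' →
      (∃ a1, u' = Sum.inl a1) ∨ (∃ a1, v' = Sum.inl a1) := by
    rintro (x | b1) (x' | b1') hadj
    · exact Or.inl ⟨x, rfl⟩
    · exact Or.inl ⟨x, rfl⟩
    · exact Or.inr ⟨x', rfl⟩
    · simp [completeBipartiteGraph] at hadj
  have exclAC : ∀ (u v : Fin a ⊕ Fin e) (u' v' : Fin a ⊕ Fin b),
      (completeBipartiteGraph (Fin a) (Fin b)).Adj u' v' →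
      s(eA u, eA v) = s(eC u', eC v') → False := by
    intro u v u' v' hadj heq
    rcases bipR u' v' hadj with ⟨b1, rfl⟩ | ⟨b1, rfl⟩ <;>
      rcases Sym2.eq_iff.mp heq with ⟨h1, h2⟩ | ⟨h1, h2⟩
    · exact hAC u b1 h1
    · exact hAC v b1 h2
    · exact hAC v b1 h2
    · exact hAC u b1 h1
  have exclBC : ∀ (u v : Fin b ⊕ Fin e) (u' v' : Fin a ⊕ Fin b),
      (completeBipartiteGraph (Fin a) (Fin b)).Adj u' v' →
      s(eB u, eB v) = s(eC u', eC v') → False := by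
    intro u v u' v' hadj heq
    rcases bipL u' v' hadj with ⟨a1, rfl⟩ | ⟨a1, rfl⟩ <;>
      rcases Sym2.eq_iff.mp heq with ⟨h1, h2⟩ | ⟨h1, h2⟩
    · exact hBC u a1 h1
    · exact hBC v a1 h2
    · exact hBC v a1 h2
    · exact hBC u a1 h1
  let M : ι1 ⊕ ι2 ⊕ ι3 → X → T :=
    Sum.elim (fun i => eA ∘ m1 i) (Sum.elim (fun i => eB ∘ m2 i) (fun i => eC ∘ m3 i))
  have covA : ∀ (i : ι1) (e0 : Sym2 T), e0 ∈ Sym2.map (M (Sum.inl i)) '' G.edgeSet →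
      ∃ u v, u ≠ v ∧ e0 = s(eA u, eA v) ∧ s(u, v) ∈ Sym2.map (m1 i) '' G.edgeSet := by
    intro i e0 h
    obtain ⟨a1, b1, hab, heq⟩ := unpack_mem_map h
    exact ⟨m1 i a1, m1 i b1, (hm1.2.1 i _ _ ((G.mem_edgeSet).mp hab)).ne, heq,
      mem_map_image_pair hab⟩
  have covB : ∀ (i : ι2) (e0 : Sym2 T), e0 ∈ Sym2.map (M (Sum.inr (Sum.inl i))) '' G.edgeSet →
      ∃ u v, u ≠ v ∧ e0 = s(eB u, eB v) ∧ s(u, v) ∈ Sym2.map (m2 i) '' G.edgeSet := by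
    intro i e0 h
    obtain ⟨a1, b1, hab, heq⟩ := unpack_mem_map h
    exact ⟨m2 i a1, m2 i b1, (hm2.2.1 i _ _ ((G.mem_edgeSet).mp hab)).ne, heq,
      mem_map_image_pair hab⟩
  have covC : ∀ (i : ι3) (e0 : Sym2 T), e0 ∈ Sym2.map (M (Sum.inr (Sum.inr i))) '' G.edgeSet →
      ∃ u v, (completeBipartiteGraph (Fin a) (Fin b)).Adj u v ∧ e0 = s(eC u, eC v) ∧
        s(u, v) ∈ Sym2.map (m3 i) '' G.edgeSet := by
    intro i e0 h
    obtain ⟨a1, b1, hab, heq⟩ := unpack_mem_map h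
    exact ⟨m3 i a1, m3 i b1, hm3.2.1 i _ _ ((G.mem_edgeSet).mp hab), heq,
      mem_map_image_pair hab⟩
  have uniqA : ∀ u v : Fin a ⊕ Fin e, u ≠ v →
      ∃! idx : ι1 ⊕ ι2 ⊕ ι3, s(eA u, eA v) ∈ Sym2.map (M idx) '' G.edgeSet := by
    intro u v hne
    obtain ⟨i, hi, hiu⟩ := hm1.2.2 s(u, v) (by rwa [SimpleGraph.mem_edgeSet, top_adj])
    refine ⟨Sum.inl i, ?_, ?_⟩
    · obtain ⟨a1, b1, hab, heq⟩ := unpack_mem_map hi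
      refine ⟨s(a1, b1), hab, ?_⟩
      show Sym2.map (eA ∘ m1 i) s(a1, b1) = s(eA u, eA v)
      rw [← Sym2.map_map, Sym2.map_pair_eq, ← heq, Sym2.map_pair_eq]
    · rintro (i' | i' | i') hmem
      · obtain ⟨u', v', hne', heq, hz⟩ := covA i' _ hmem
        have : s(u, v) = s(u', v') := Sym2.map.injective injA (by
          rw [Sym2.map_pair_eq, Sym2.map_pair_eq]; exact heq)
        exact congrArg Sum.inl (hiu i' (this ▸ hz))
      · obtain ⟨u', v', hne', heq, -⟩ := covB i' _ hmem
        exact absurd heq (fun h => exclAB u v u' v' hne h)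
      · obtain ⟨u', v', hadj, heq, -⟩ := covC i' _ hmem
        exact absurd heq (fun h => exclAC u v u' v' hadj h)
  have uniqB : ∀ u v : Fin b ⊕ Fin e, u ≠ v →
      ∃! idx : ι1 ⊕ ι2 ⊕ ι3, s(eB u, eB v) ∈ Sym2.map (M idx) '' G.edgeSet := by
    intro u v hne
    obtain ⟨i, hi, hiu⟩ := hm2.2.2 s(u, v) (by rwa [SimpleGraph.mem_edgeSet, top_adj])
    refine ⟨Sum.inr (Sum.inl i), ?_, ?_⟩
    · obtain ⟨a1, b1, hab, heq⟩ := unpack_mem_map hi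
      refine ⟨s(a1, b1), hab, ?_⟩
      show Sym2.map (eB ∘ m2 i) s(a1, b1) = s(eB u, eB v)
      rw [← Sym2.map_map, Sym2.map_pair_eq, ← heq, Sym2.map_pair_eq]
    · rintro (i' | i' | i') hmem
      · obtain ⟨u', v', hne', heq, -⟩ := covA i' _ hmem
        exact absurd heq.symm (fun h => exclAB u' v' u v hne' h)
      · obtain ⟨u', v', hne', heq, hz⟩ := covB i' _ hmem
        have : s(u, v) = s(u', v') := Sym2.map.injective injB (by
          rw [Sym2.map_pair_eq, Sym2.map_pair_eq]; exact heq)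
        exact congrArg (Sum.inr ∘ Sum.inl) (hiu i' (this ▸ hz))
      · obtain ⟨u', v', hadj, heq, -⟩ := covC i' _ hmem
        exact absurd heq (fun h => exclBC u v u' v' hadj h)
  have uniqC : ∀ u v : Fin a ⊕ Fin b, (completeBipartiteGraph (Fin a) (Fin b)).Adj u v →
      ∃! idx : ι1 ⊕ ι2 ⊕ ι3, s(eC u, eC v) ∈ Sym2.map (M idx) '' G.edgeSet := by
    intro u v hadj0
    obtain ⟨i, hi, hiu⟩ := hm3.2.2 s(u, v) ((SimpleGraph.mem_edgeSet _).mpr hadj0)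
    refine ⟨Sum.inr (Sum.inr i), ?_, ?_⟩
    · obtain ⟨a1, b1, hab, heq⟩ := unpack_mem_map hi
      refine ⟨s(a1, b1), hab, ?_⟩
      show Sym2.map (eC ∘ m3 i) s(a1, b1) = s(eC u, eC v)
      rw [← Sym2.map_map, Sym2.map_pair_eq, ← heq, Sym2.map_pair_eq]
    · rintro (i' | i' | i') hmem
      · obtain ⟨u', v', hne', heq, -⟩ := covA i' _ hmem
        exact absurd heq.symm (fun h => exclAC u' v' u v hadj0 h)
      · obtain ⟨u', v', hne', heq, -⟩ := covB i' _ hmem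
        exact absurd heq.symm (fun h => exclBC u' v' u v hadj0 h)
      · obtain ⟨u', v', hadj, heq, hz⟩ := covC i' _ hmem
        have : s(u, v) = s(u', v') := Sym2.map.injective injC (by
          rw [Sym2.map_pair_eq, Sym2.map_pair_eq]; exact heq)
        exact congrArg (Sum.inr ∘ Sum.inr) (hiu i' (this ▸ hz))
  have main : (⊤ : SimpleGraph T).DecomposesInto G := by
    refine IsCopies.decomposesInto (ι := ι1 ⊕ ι2 ⊕ ι3) (m := M) ⟨?_, ?_, ?_⟩
    · rintro (i | i | i)
      · exact injA.comp (hm1.1 i)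
      · exact injB.comp (hm2.1 i)
      · exact injC.comp (hm3.1 i)
    · rintro (i | i | i) x y hxy
      · exact (top_adj _ _).mpr (fun h => (hm1.2.1 i x y hxy).ne (injA h))
      · exact (top_adj _ _).mpr (fun h => (hm2.2.1 i x y hxy).ne (injB h))
      · exact (top_adj _ _).mpr (fun h => (hm3.2.1 i x y hxy).ne (injC h))
    · intro e0 he0
      induction e0 using Sym2.ind with
      | _ x y =>
        rw [SimpleGraph.mem_edgeSet, top_adj] at he0
        rcases x with x | x | x <;> rcases y with y | y | y
        · exact uniqA (Sum.inl x) (Sum.inl y) (fun h => he0 (by rw [Sum.inl_injective h]))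
        · exact uniqC (Sum.inl x) (Sum.inr y) (by simp [completeBipartiteGraph])
        · exact uniqA (Sum.inl x) (Sum.inr y) Sum.inl_ne_inr
        · rw [Sym2.eq_swap]
          exact uniqC (Sum.inl y) (Sum.inr x) (by simp [completeBipartiteGraph])
        · exact uniqB (Sum.inl x) (Sum.inl y) (fun h => he0 (by rw [Sum.inl_injective h]))
        · exact uniqB (Sum.inl x) (Sum.inr y) Sum.inl_ne_inr
        · rw [Sym2.eq_swap]
          exact uniqA (Sum.inl y) (Sum.inr x) Sum.inl_ne_inr
        · rw [Sym2.eq_swap]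
          exact uniqB (Sum.inl y) (Sum.inr x) Sum.inl_ne_inr
        · exact absurd (congrArg (fun c => (Sum.inr (Sum.inr c) : T)) (hE x y)) he0
  exact hasDesign_of_top_decomposesInto (α := Fin a ⊕ (Fin b ⊕ Fin e))
    (by simp only [Fintype.card_sum, Fintype.card_fin]; omega) main

end step
theorem bipartite_construction {V : Type*} (G : SimpleGraph V)
    (d f r s g e : ℕ) (hd : 0 < d) (hf : 0 < f) (hr : 0 < r) (hs : 0 < s)
    (he : e = 0 ∨ e = 1)
    (h1 : G.HasDesign (f * d * r * s + e))
    (h2 : G.HasDesign (g * d * s + e))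
    (h3 : (completeBipartiteGraph (Fin (d * r))
      (Fin (d * s))).DecomposesInto G)
    (t : ℕ) :
    G.HasDesign (t * f * d * r * s + g * d * s + e) := by
  induction t with
  | zero =>
    have h : 0 * f * d * r * s + g * d * s + e = g * d * s + e := by ring
    rwa [h]
  | succ t ih =>
    have hb : (completeBipartiteGraph (Fin (f * d * r * s))
        (Fin (t * f * d * r * s + g * d * s))).DecomposesInto G := by
      have φ := completeBipartite_iso
        (finCongr (show f * d * r * s = (f * s) * (d * r) by ring))
        (finCongr (show t * f * d * r * s + g * d * s = (t * f * r + g) * (d * s) by ring))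
      exact φ.decomposesInto.trans
        ((blowup (f * s) (t * f * r + g) (d * r) (d * s)).trans h3)
    have hstep := step_lemma G (f * d * r * s) (t * f * d * r * s + g * d * s) e
      (by omega) h1 ih hb
    have harith : f * d * r * s + (t * f * d * r * s + g * d * s) + e
        = (t + 1) * f * d * r * s + g * d * s + e := by ring
    rwa [harith] at hstep
end

section
/- Let G be a simple graph, let r and s be positive integers, and let e be 0 or 1. Suppose there exist G designs of orders r + e and s + e, and suppose there exist decompositions into G of the complete bipartite graphs K_{r,r} and K_{r,s}. Then for every integer t ≥ 0 there exists a G design of order t·r + s + e. -/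
open SimpleGraph

section Infra

variable {V W U : Type*}

/-- Iso between a subgraph and its image under an injective hom. -/
noncomputable def subgraphMapIso {K : SimpleGraph V} {K' : SimpleGraph W} (f : K →g K')
    (hf : Function.Injective f) (H : K.Subgraph) : H.coe ≃g (H.map f).coe where
  toEquiv := Equiv.Set.image f H.verts hf
  map_rel_iff' := by
    rintro ⟨a, ha⟩ ⟨b, hb⟩
    simp only [Equiv.Set.image, Equiv.Set.imageOfInjOn, Equiv.coe_fn_mk]
    constructor
    · rintro ⟨u, v, h, hu, hv⟩
      rw [hf hu, hf hv] at h
      exact h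
    · intro h
      exact ⟨a, b, h, rfl, rfl⟩

lemma subgraphMap_adj {K : SimpleGraph V} {K' : SimpleGraph W} (φ : K ≃g K')
    (H : K.Subgraph) (u v : W) :
    (H.map φ.toHom).Adj u v ↔ H.Adj (φ.symm u) (φ.symm v) := by
  constructor
  · rintro ⟨a, b, h, rfl, rfl⟩
    simpa using h
  · intro h
    exact ⟨_, _, h, φ.apply_symm_apply u, φ.apply_symm_apply v⟩

lemma decomposesInto_of_iso {K : SimpleGraph V} {K' : SimpleGraph W} {G : SimpleGraph U}
    (φ : K ≃g K') (h : K.DecomposesInto G) : K'.DecomposesInto G := by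
  obtain ⟨ι, f, hiso, hcov⟩ := h
  refine ⟨ι, fun i => (f i).map φ.toHom, fun i =>
    ⟨(hiso i).some.trans (subgraphMapIso φ.toHom φ.injective (f i))⟩, ?_⟩
  intro e he
  induction e with
  | _ u v =>
    rw [mem_edgeSet] at he
    have hK : K.Adj (φ.symm u) (φ.symm v) := by
      rw [← φ.map_rel_iff]; simpa using he
    obtain ⟨i, hi, huniq⟩ := hcov s(φ.symm u, φ.symm v) (by rwa [mem_edgeSet])
    rw [Subgraph.mem_edgeSet] at hi
    refine ⟨i, ?_, ?_⟩
    · simp only [Subgraph.mem_edgeSet, subgraphMap_adj]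
      exact hi
    · intro i' h'
      simp only [Subgraph.mem_edgeSet, subgraphMap_adj] at h'
      exact huniq i' (by simpa only [Subgraph.mem_edgeSet])

lemma decomposesInto_glue {K : SimpleGraph V} {G : SimpleGraph U} {J : Type}
    (F : J → K.Subgraph) (hdec : ∀ j, (F j).coe.DecomposesInto G)
    (hcov : ∀ e ∈ K.edgeSet, ∃! j, e ∈ (F j).edgeSet) : K.DecomposesInto G := by
  choose ι g hiso hc using hdec
  refine ⟨(Σ j, ι j), fun p => Subgraph.coeSubgraph (g p.1 p.2), ?_, ?_⟩
  · rintro ⟨j, i⟩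
    exact ⟨(hiso j i).some.trans (subgraphMapIso (F j).hom Subtype.val_injective _)⟩
  · intro e he
    induction e with
    | _ u v =>
      obtain ⟨j, hj, hjun⟩ := hcov s(u, v) he
      rw [Subgraph.mem_edgeSet] at hj
      have hu : u ∈ (F j).verts := (F j).edge_vert hj
      have hv : v ∈ (F j).verts := (F j).edge_vert hj.symm
      have hcoe : (F j).coe.Adj ⟨u, hu⟩ ⟨v, hv⟩ := hj
      obtain ⟨i, hi, hiun⟩ := hc j s(⟨u, hu⟩, ⟨v, hv⟩) (by rwa [mem_edgeSet])
      rw [Subgraph.mem_edgeSet] at hi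
      refine ⟨⟨j, i⟩, ?_, ?_⟩
      · simp only [Subgraph.mem_edgeSet, Subgraph.coeSubgraph_adj]
        exact ⟨hu, hv, hi⟩
      · rintro ⟨j', i'⟩ h'
        simp only [Subgraph.mem_edgeSet, Subgraph.coeSubgraph_adj] at h'
        obtain ⟨hu', hv', hadj⟩ := h'
        have hj' : j' = j := hjun j' (by
          simp only [Subgraph.mem_edgeSet]
          exact (g j' i').adj_sub hadj)
        subst hj'
        have : i' = i := hiun i' (by
          simp only [Subgraph.mem_edgeSet]
          exact hadj)
        subst this
        rfl

def cliqueSub {α : Type*} (A : Set α) : (⊤ : SimpleGraph α).Subgraph where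
  verts := A
  Adj u v := u ∈ A ∧ v ∈ A ∧ u ≠ v
  adj_sub h := by rw [top_adj]; exact h.2.2
  edge_vert h := h.1
  symm := ⟨fun u v h => ⟨h.2.1, h.1, h.2.2.symm⟩⟩

noncomputable def cliqueSubIso {α β : Type*} (A : Set α) (φ : β ≃ A) :
    (⊤ : SimpleGraph β) ≃g (cliqueSub A).coe where
  toEquiv := φ
  map_rel_iff' := by
    intro a b
    rw [top_adj]
    constructor
    · rintro ⟨-, -, h⟩ rfl
      exact h rfl
    · intro h
      exact ⟨(φ a).2, (φ b).2, fun hval => h (φ.injective (Subtype.ext hval))⟩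

def bipartiteSub {α : Type*} (A B : Set α) (hd : Disjoint A B) :
    (⊤ : SimpleGraph α).Subgraph where
  verts := A ∪ B
  Adj u v := (u ∈ A ∧ v ∈ B) ∨ (u ∈ B ∧ v ∈ A)
  adj_sub h := by
    rw [top_adj]
    rintro rfl
    rcases h with ⟨h1, h2⟩ | ⟨h1, h2⟩
    · exact Set.disjoint_left.mp hd h1 h2
    · exact Set.disjoint_left.mp hd h2 h1
  edge_vert h := by rcases h with ⟨h1, -⟩ | ⟨h1, -⟩ <;> [exact Or.inl h1; exact Or.inr h1]
  symm := ⟨fun u v h => by tauto⟩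

noncomputable def bipartiteSubIso {α β γ : Type*} (A B : Set α) (hd : Disjoint A B)
    (φ : β ≃ A) (ψ : γ ≃ B) :
    completeBipartiteGraph β γ ≃g (bipartiteSub A B hd).coe := by
  classical
  exact {
    toEquiv := (Equiv.sumCongr φ ψ).trans (Equiv.Set.union hd).symm
    map_rel_iff' := by
      rintro (a | a) (b | b) <;>
        simp only [Equiv.trans_apply, Equiv.sumCongr_apply, Sum.map_inl, Sum.map_inr,
          Equiv.Set.union_symm_apply_left, Equiv.Set.union_symm_apply_right,
          completeBipartiteGraph_adj, Sum.isLeft_inl, Sum.isRight_inl, Sum.isLeft_inr,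
          Sum.isRight_inr, Subgraph.coe_adj] <;>
        constructor
      · rintro (⟨-, h2⟩ | ⟨h1, -⟩)
        · exact absurd (φ b).2 (Set.disjoint_right.mp hd h2)
        · exact absurd (φ a).2 (Set.disjoint_right.mp hd h1)
      · simp
      · intro; simp
      · intro
        exact Or.inl ⟨(φ a).2, (ψ b).2⟩
      · intro; simp
      · intro
        exact Or.inr ⟨(ψ a).2, (φ b).2⟩
      · rintro (⟨h1, -⟩ | ⟨-, h2⟩)
        · exact absurd h1 (Set.disjoint_left.mp (by exact hd.symm) (ψ a).2)
        · exact absurd h2 (Set.disjoint_left.mp (by exact hd.symm) (ψ b).2)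
      · simp }

end Infra
section Constr

/-- Vertex type for the construction: `t` blocks of size `r`, a block of size `s`,
and `e` extra vertices. -/
abbrev VT (r s e t : ℕ) : Type := (Fin t × Fin r) ⊕ (Fin s ⊕ Fin e)

def blkA (r s e t : ℕ) (i : Fin t) : Set (VT r s e t) := {x | ∃ a, x = Sum.inl (i, a)}
def blkS (r s e t : ℕ) : Set (VT r s e t) := {x | ∃ a, x = Sum.inr (Sum.inl a)}
def blkE (r s e t : ℕ) : Set (VT r s e t) := {x | ∃ a, x = Sum.inr (Sum.inr a)}

variable {r s e t : ℕ}

@[simp] lemma inl_mem_blkA (i i' : Fin t) (a : Fin r) :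
    (Sum.inl (i, a) : VT r s e t) ∈ blkA r s e t i' ↔ i = i' := by
  simp [blkA, eq_comm]

@[simp] lemma inrl_not_mem_blkA (i : Fin t) (a : Fin s) :
    (Sum.inr (Sum.inl a) : VT r s e t) ∉ blkA r s e t i := by
  simp [blkA]

@[simp] lemma inrr_not_mem_blkA (i : Fin t) (a : Fin e) :
    (Sum.inr (Sum.inr a) : VT r s e t) ∉ blkA r s e t i := by
  simp [blkA]

@[simp] lemma inl_not_mem_blkS (i : Fin t) (a : Fin r) :
    (Sum.inl (i, a) : VT r s e t) ∉ blkS r s e t := by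
  simp [blkS]

@[simp] lemma inrl_mem_blkS (a : Fin s) :
    (Sum.inr (Sum.inl a) : VT r s e t) ∈ blkS r s e t := ⟨a, rfl⟩

@[simp] lemma inrr_not_mem_blkS (a : Fin e) :
    (Sum.inr (Sum.inr a) : VT r s e t) ∉ blkS r s e t := by
  simp [blkS]

@[simp] lemma inl_not_mem_blkE (i : Fin t) (a : Fin r) :
    (Sum.inl (i, a) : VT r s e t) ∉ blkE r s e t := by
  simp [blkE]

@[simp] lemma inrl_not_mem_blkE (a : Fin s) :
    (Sum.inr (Sum.inl a) : VT r s e t) ∉ blkE r s e t := by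
  simp [blkE]

@[simp] lemma inrr_mem_blkE (a : Fin e) :
    (Sum.inr (Sum.inr a) : VT r s e t) ∈ blkE r s e t := ⟨a, rfl⟩

lemma disj_AA {i j : Fin t} (hij : i ≠ j) :
    Disjoint (blkA r s e t i) (blkA r s e t j) := by
  rw [Set.disjoint_left]
  rintro x ⟨a, rfl⟩ hb
  simp at hb
  exact hij hb

lemma disj_AS (i : Fin t) : Disjoint (blkA r s e t i) (blkS r s e t) := by
  rw [Set.disjoint_left]
  rintro x ⟨a, rfl⟩ hb
  simp at hb

lemma disj_AE (i : Fin t) : Disjoint (blkA r s e t i) (blkE r s e t) := by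
  rw [Set.disjoint_left]
  rintro x ⟨a, rfl⟩ hb
  simp at hb

lemma disj_SE : Disjoint (blkS r s e t) (blkE r s e t) := by
  rw [Set.disjoint_left]
  rintro x ⟨a, rfl⟩ hb
  simp at hb

noncomputable def eqA (r s e t : ℕ) (i : Fin t) : Fin r ≃ blkA r s e t i :=
  Equiv.ofBijective (fun a => ⟨Sum.inl (i, a), a, rfl⟩) (by
    constructor
    · intro a b hab
      simpa using congrArg Subtype.val hab
    · rintro ⟨x, a, rfl⟩
      exact ⟨a, rfl⟩)

noncomputable def eqS (r s e t : ℕ) : Fin s ≃ blkS r s e t :=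
  Equiv.ofBijective (fun a => ⟨Sum.inr (Sum.inl a), a, rfl⟩) (by
    constructor
    · intro a b hab
      simpa using congrArg Subtype.val hab
    · rintro ⟨x, a, rfl⟩
      exact ⟨a, rfl⟩)

noncomputable def eqE (r s e t : ℕ) : Fin e ≃ blkE r s e t :=
  Equiv.ofBijective (fun a => ⟨Sum.inr (Sum.inr a), a, rfl⟩) (by
    constructor
    · intro a b hab
      simpa using congrArg Subtype.val hab
    · rintro ⟨x, a, rfl⟩
      exact ⟨a, rfl⟩)

noncomputable def eqAE (r s e t : ℕ) (i : Fin t) :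
    Fin (r + e) ≃ ↥(blkA r s e t i ∪ blkE r s e t) := by
  classical
  exact finSumFinEquiv.symm.trans
    ((Equiv.sumCongr (eqA r s e t i) (eqE r s e t)).trans (Equiv.Set.union (disj_AE i)).symm)

noncomputable def eqSE (r s e t : ℕ) :
    Fin (s + e) ≃ ↥(blkS r s e t ∪ blkE r s e t) := by
  classical
  exact finSumFinEquiv.symm.trans
    ((Equiv.sumCongr (eqS r s e t) (eqE r s e t)).trans (Equiv.Set.union disj_SE).symm)

/-- Index type for the pieces. -/
abbrev JT (t : ℕ) : Type := {p : Fin t × Fin t // p.1 < p.2} ⊕ (Fin t ⊕ (Fin t ⊕ Unit))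

/-- The pieces. -/
def FF (r s e t : ℕ) : JT t → (⊤ : SimpleGraph (VT r s e t)).Subgraph
  | Sum.inl p => bipartiteSub (blkA r s e t p.1.1) (blkA r s e t p.1.2) (disj_AA (Fin.ne_of_lt p.2))
  | Sum.inr (Sum.inl i) => bipartiteSub (blkA r s e t i) (blkS r s e t) (disj_AS i)
  | Sum.inr (Sum.inr (Sum.inl i)) => cliqueSub (blkA r s e t i ∪ blkE r s e t)
  | Sum.inr (Sum.inr (Sum.inr _)) => cliqueSub (blkS r s e t ∪ blkE r s e t)

lemma cover (r s e t : ℕ) (he : e = 0 ∨ e = 1) (u v : VT r s e t) (huv : u ≠ v) :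
    ∃! j, (FF r s e t j).Adj u v := by
  rcases u with ⟨i, a⟩ | (a | a) <;> rcases v with ⟨i', b⟩ | (b | b)
  -- case 1 : inl (i,a), inl (i',b)
  · rcases lt_trichotomy i i' with hlt | heq | hgt
    · refine ⟨Sum.inl ⟨(i, i'), hlt⟩, Or.inl ⟨⟨a, rfl⟩, ⟨b, rfl⟩⟩, ?_⟩
      rintro (⟨⟨p, q⟩, hpq⟩ | i₀ | i₀ | j₀) hadj
      · rcases hadj with ⟨h1, h2⟩ | ⟨h1, h2⟩
        · obtain rfl := (inl_mem_blkA _ _ _).mp h1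
          obtain rfl := (inl_mem_blkA _ _ _).mp h2
          rfl
        · obtain rfl := (inl_mem_blkA _ _ _).mp h1
          obtain rfl := (inl_mem_blkA _ _ _).mp h2
          exact absurd hpq (lt_asymm hlt)
      · rcases hadj with ⟨-, h2⟩ | ⟨h1, -⟩
        · exact absurd h2 (inl_not_mem_blkS _ _)
        · exact absurd h1 (inl_not_mem_blkS _ _)
      · obtain ⟨h1, h2, -⟩ := hadj
        rcases h1 with h1 | h1
        · rcases h2 with h2 | h2
          · obtain rfl := (inl_mem_blkA _ _ _).mp h1
            obtain rfl := (inl_mem_blkA _ _ _).mp h2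
            exact absurd hlt (lt_irrefl _)
          · exact absurd h2 (inl_not_mem_blkE _ _)
        · exact absurd h1 (inl_not_mem_blkE _ _)
      · obtain ⟨h1, -, -⟩ := hadj
        rcases h1 with h1 | h1
        · exact absurd h1 (inl_not_mem_blkS _ _)
        · exact absurd h1 (inl_not_mem_blkE _ _)
    · subst heq
      refine ⟨Sum.inr (Sum.inr (Sum.inl i)), ⟨Or.inl ⟨a, rfl⟩, Or.inl ⟨b, rfl⟩, huv⟩, ?_⟩
      rintro (⟨⟨p, q⟩, hpq⟩ | i₀ | i₀ | j₀) hadj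
      · rcases hadj with ⟨h1, h2⟩ | ⟨h1, h2⟩
        · obtain rfl := (inl_mem_blkA _ _ _).mp h1
          obtain rfl := (inl_mem_blkA _ _ _).mp h2
          exact absurd hpq (lt_irrefl _)
        · obtain rfl := (inl_mem_blkA _ _ _).mp h1
          obtain rfl := (inl_mem_blkA _ _ _).mp h2
          exact absurd hpq (lt_irrefl _)
      · rcases hadj with ⟨-, h2⟩ | ⟨h1, -⟩
        · exact absurd h2 (inl_not_mem_blkS _ _)
        · exact absurd h1 (inl_not_mem_blkS _ _)
      · obtain ⟨h1, -, -⟩ := hadj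
        rcases h1 with h1 | h1
        · obtain rfl := (inl_mem_blkA _ _ _).mp h1
          rfl
        · exact absurd h1 (inl_not_mem_blkE _ _)
      · obtain ⟨h1, -, -⟩ := hadj
        rcases h1 with h1 | h1
        · exact absurd h1 (inl_not_mem_blkS _ _)
        · exact absurd h1 (inl_not_mem_blkE _ _)
    · refine ⟨Sum.inl ⟨(i', i), hgt⟩, Or.inr ⟨⟨a, rfl⟩, ⟨b, rfl⟩⟩, ?_⟩
      rintro (⟨⟨p, q⟩, hpq⟩ | i₀ | i₀ | j₀) hadj
      · rcases hadj with ⟨h1, h2⟩ | ⟨h1, h2⟩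
        · obtain rfl := (inl_mem_blkA _ _ _).mp h1
          obtain rfl := (inl_mem_blkA _ _ _).mp h2
          exact absurd hpq (lt_asymm hgt)
        · obtain rfl := (inl_mem_blkA _ _ _).mp h1
          obtain rfl := (inl_mem_blkA _ _ _).mp h2
          rfl
      · rcases hadj with ⟨-, h2⟩ | ⟨h1, -⟩
        · exact absurd h2 (inl_not_mem_blkS _ _)
        · exact absurd h1 (inl_not_mem_blkS _ _)
      · obtain ⟨h1, h2, -⟩ := hadj
        rcases h1 with h1 | h1
        · rcases h2 with h2 | h2
          · obtain rfl := (inl_mem_blkA _ _ _).mp h1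
            obtain rfl := (inl_mem_blkA _ _ _).mp h2
            exact absurd hgt (lt_irrefl _)
          · exact absurd h2 (inl_not_mem_blkE _ _)
        · exact absurd h1 (inl_not_mem_blkE _ _)
      · obtain ⟨h1, -, -⟩ := hadj
        rcases h1 with h1 | h1
        · exact absurd h1 (inl_not_mem_blkS _ _)
        · exact absurd h1 (inl_not_mem_blkE _ _)
  -- case 2 : inl (i,a), inr (inl b)
  · refine ⟨Sum.inr (Sum.inl i), Or.inl ⟨⟨a, rfl⟩, ⟨b, rfl⟩⟩, ?_⟩
    rintro (⟨⟨p, q⟩, hpq⟩ | i₀ | i₀ | j₀) hadj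
    · rcases hadj with ⟨-, h2⟩ | ⟨-, h2⟩ <;> exact absurd h2 (inrl_not_mem_blkA _ _)
    · rcases hadj with ⟨h1, -⟩ | ⟨h1, -⟩
      · obtain rfl := (inl_mem_blkA _ _ _).mp h1
        rfl
      · exact absurd h1 (inl_not_mem_blkS _ _)
    · obtain ⟨-, h2, -⟩ := hadj
      rcases h2 with h2 | h2
      · exact absurd h2 (inrl_not_mem_blkA _ _)
      · exact absurd h2 (inrl_not_mem_blkE _)
    · obtain ⟨h1, -, -⟩ := hadj
      rcases h1 with h1 | h1
      · exact absurd h1 (inl_not_mem_blkS _ _)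
      · exact absurd h1 (inl_not_mem_blkE _ _)
  -- case 3 : inl (i,a), inr (inr b)
  · refine ⟨Sum.inr (Sum.inr (Sum.inl i)), ⟨Or.inl ⟨a, rfl⟩, Or.inr ⟨b, rfl⟩, huv⟩, ?_⟩
    rintro (⟨⟨p, q⟩, hpq⟩ | i₀ | i₀ | j₀) hadj
    · rcases hadj with ⟨-, h2⟩ | ⟨-, h2⟩ <;> exact absurd h2 (inrr_not_mem_blkA _ _)
    · rcases hadj with ⟨-, h2⟩ | ⟨h1, -⟩
      · exact absurd h2 (inrr_not_mem_blkS _)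
      · exact absurd h1 (inl_not_mem_blkS _ _)
    · obtain ⟨h1, -, -⟩ := hadj
      rcases h1 with h1 | h1
      · obtain rfl := (inl_mem_blkA _ _ _).mp h1
        rfl
      · exact absurd h1 (inl_not_mem_blkE _ _)
    · obtain ⟨h1, -, -⟩ := hadj
      rcases h1 with h1 | h1
      · exact absurd h1 (inl_not_mem_blkS _ _)
      · exact absurd h1 (inl_not_mem_blkE _ _)
  -- case 4 : inr (inl a), inl (i',b)
  · refine ⟨Sum.inr (Sum.inl i'), Or.inr ⟨⟨a, rfl⟩, ⟨b, rfl⟩⟩, ?_⟩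
    rintro (⟨⟨p, q⟩, hpq⟩ | i₀ | i₀ | j₀) hadj
    · rcases hadj with ⟨h1, -⟩ | ⟨h1, -⟩ <;> exact absurd h1 (inrl_not_mem_blkA _ _)
    · rcases hadj with ⟨h1, -⟩ | ⟨-, h2⟩
      · exact absurd h1 (inrl_not_mem_blkA _ _)
      · obtain rfl := (inl_mem_blkA _ _ _).mp h2
        rfl
    · obtain ⟨h1, -, -⟩ := hadj
      rcases h1 with h1 | h1
      · exact absurd h1 (inrl_not_mem_blkA _ _)
      · exact absurd h1 (inrl_not_mem_blkE _)
    · obtain ⟨-, h2, -⟩ := hadj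
      rcases h2 with h2 | h2
      · exact absurd h2 (inl_not_mem_blkS _ _)
      · exact absurd h2 (inl_not_mem_blkE _ _)
  -- case 5 : inr (inl a), inr (inl b)
  · refine ⟨Sum.inr (Sum.inr (Sum.inr ())), ⟨Or.inl ⟨a, rfl⟩, Or.inl ⟨b, rfl⟩, huv⟩, ?_⟩
    rintro (⟨⟨p, q⟩, hpq⟩ | i₀ | i₀ | j₀) hadj
    · rcases hadj with ⟨h1, -⟩ | ⟨h1, -⟩ <;> exact absurd h1 (inrl_not_mem_blkA _ _)
    · rcases hadj with ⟨h1, -⟩ | ⟨-, h2⟩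
      · exact absurd h1 (inrl_not_mem_blkA _ _)
      · exact absurd h2 (inrl_not_mem_blkA _ _)
    · obtain ⟨h1, -, -⟩ := hadj
      rcases h1 with h1 | h1
      · exact absurd h1 (inrl_not_mem_blkA _ _)
      · exact absurd h1 (inrl_not_mem_blkE _)
    · rfl
  -- case 6 : inr (inl a), inr (inr b)
  · refine ⟨Sum.inr (Sum.inr (Sum.inr ())), ⟨Or.inl ⟨a, rfl⟩, Or.inr ⟨b, rfl⟩, huv⟩, ?_⟩
    rintro (⟨⟨p, q⟩, hpq⟩ | i₀ | i₀ | j₀) hadj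
    · rcases hadj with ⟨h1, -⟩ | ⟨h1, -⟩ <;> exact absurd h1 (inrl_not_mem_blkA _ _)
    · rcases hadj with ⟨h1, -⟩ | ⟨-, h2⟩
      · exact absurd h1 (inrl_not_mem_blkA _ _)
      · exact absurd h2 (inrr_not_mem_blkA _ _)
    · obtain ⟨h1, -, -⟩ := hadj
      rcases h1 with h1 | h1
      · exact absurd h1 (inrl_not_mem_blkA _ _)
      · exact absurd h1 (inrl_not_mem_blkE _)
    · rfl
  -- case 7 : inr (inr a), inl (i',b)
  · refine ⟨Sum.inr (Sum.inr (Sum.inl i')), ⟨Or.inr ⟨a, rfl⟩, Or.inl ⟨b, rfl⟩, huv⟩, ?_⟩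
    rintro (⟨⟨p, q⟩, hpq⟩ | i₀ | i₀ | j₀) hadj
    · rcases hadj with ⟨h1, -⟩ | ⟨h1, -⟩ <;> exact absurd h1 (inrr_not_mem_blkA _ _)
    · rcases hadj with ⟨h1, -⟩ | ⟨h1, -⟩
      · exact absurd h1 (inrr_not_mem_blkA _ _)
      · exact absurd h1 (inrr_not_mem_blkS _)
    · obtain ⟨-, h2, -⟩ := hadj
      rcases h2 with h2 | h2
      · obtain rfl := (inl_mem_blkA _ _ _).mp h2
        rfl
      · exact absurd h2 (inl_not_mem_blkE _ _)
    · obtain ⟨-, h2, -⟩ := hadj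
      rcases h2 with h2 | h2
      · exact absurd h2 (inl_not_mem_blkS _ _)
      · exact absurd h2 (inl_not_mem_blkE _ _)
  -- case 8 : inr (inr a), inr (inl b)
  · refine ⟨Sum.inr (Sum.inr (Sum.inr ())), ⟨Or.inr ⟨a, rfl⟩, Or.inl ⟨b, rfl⟩, huv⟩, ?_⟩
    rintro (⟨⟨p, q⟩, hpq⟩ | i₀ | i₀ | j₀) hadj
    · rcases hadj with ⟨h1, -⟩ | ⟨h1, -⟩ <;> exact absurd h1 (inrr_not_mem_blkA _ _)
    · rcases hadj with ⟨h1, -⟩ | ⟨-, h2⟩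
      · exact absurd h1 (inrr_not_mem_blkA _ _)
      · exact absurd h2 (inrl_not_mem_blkA _ _)
    · obtain ⟨-, h2, -⟩ := hadj
      rcases h2 with h2 | h2
      · exact absurd h2 (inrl_not_mem_blkA _ _)
      · exact absurd h2 (inrl_not_mem_blkE _)
    · rfl
  -- case 9 : inr (inr a), inr (inr b)
  · rcases he with rfl | rfl
    · exact a.elim0
    · exact absurd (by rw [Subsingleton.elim a b]) huv

end Constr
theorem bipartite_construction_alt {V : Type*} (G : SimpleGraph V)
    (r s e : ℕ) (hr : 0 < r) (hs : 0 < s) (he : e = 0 ∨ e = 1)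
    (h1 : G.HasDesign (r + e))
    (h2 : G.HasDesign (s + e))
    (h3 : (completeBipartiteGraph (Fin r) (Fin r)).DecomposesInto G)
    (h4 : (completeBipartiteGraph (Fin r) (Fin s)).DecomposesInto G)
    (t : ℕ) :
    G.HasDesign (t * r + s + e) := by
  have hmain : (⊤ : SimpleGraph (VT r s e t)).DecomposesInto G := by
    refine decomposesInto_glue (FF r s e t) ?_ ?_
    · rintro (⟨⟨p, q⟩, hpq⟩ | i | i | j)
      · exact decomposesInto_of_iso
          (bipartiteSubIso _ _ (disj_AA (Fin.ne_of_lt hpq)) (eqA r s e t p) (eqA r s e t q)) h3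
      · exact decomposesInto_of_iso
          (bipartiteSubIso _ _ (disj_AS i) (eqA r s e t i) (eqS r s e t)) h4
      · exact decomposesInto_of_iso (cliqueSubIso _ (eqAE r s e t i)) h1
      · exact decomposesInto_of_iso (cliqueSubIso _ (eqSE r s e t)) h2
    · intro ed hed
      induction ed with
      | _ u v =>
        rw [SimpleGraph.mem_edgeSet, top_adj] at hed
        simpa only [SimpleGraph.Subgraph.mem_edgeSet] using cover r s e t he u v hed
  have hcard : Fintype.card (VT r s e t) = t * r + s + e := by
    simp [add_assoc, mul_comm]
  exact decomposesInto_of_iso (Iso.completeGraph (Fintype.equivFinOfCardEq hcard)) hmain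
end

section
/- Let G be a simple graph. Suppose there exist G designs of orders 21, 28, 29, 36, 49, 56, 57, 64, 77 and 92, and suppose there exist decompositions into G of the complete multipartite graphs K_{14,14,14}, K_{7,7,7,7}, K_{28,28,28,35}, K_{7,7,7,7,7}, K_{7,7,7,7,21} and K_{7,7,7,7,28}. Then for every nonnegative integer n with n ≡ 0, 1, 8 or 21 (mod 28) and n ≠ 8, there exists a G design of order n. -/
open SimpleGraph

namespace Theta14

variable {V0 : Type*} {G : SimpleGraph V0}

/-- The coe of a mapped subgraph along an injective hom is isomorphic to the coe. -/
lemma coe_iso_map {A B : Type*} {X : SimpleGraph A} {Y : SimpleGraph B} (f : X →g Y)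
    (hf : Function.Injective f) (H : X.Subgraph) : Nonempty (H.coe ≃g (H.map f).coe) := by
  refine ⟨⟨(Equiv.Set.image f H.verts hf).trans (Equiv.setCongr (by simp)), ?_⟩⟩
  rintro ⟨a, ha⟩ ⟨b, hb⟩
  simp only [Equiv.trans_apply, Equiv.Set.image_apply, Equiv.setCongr_apply,
    Subgraph.coe_adj, Subgraph.map_adj]
  constructor
  · rintro ⟨x, y, hxy, hx, hy⟩
    rwa [hf hx, hf hy] at hxy
  · intro h
    exact ⟨a, b, h, rfl, rfl⟩

/-- Master composition lemma. -/
lemma top_decomposesInto_of_cover {V : Type} {J : Type} {P : J → Type}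
    (L : ∀ j, SimpleGraph (P j)) (φ : ∀ j, P j → V)
    (hφ : ∀ j, Function.Injective (φ j))
    (hL : ∀ j, (L j).DecomposesInto G)
    (hcov : ∀ u v : V, u ≠ v →
      ∃! j : J, ∃ a b, (L j).Adj a b ∧ φ j a = u ∧ φ j b = v) :
    (⊤ : SimpleGraph V).DecomposesInto G := by
  choose ι f hiso hpart using hL
  have hmap : ∀ j ⦃a b : P j⦄, (L j).Adj a b → (⊤ : SimpleGraph V).Adj (φ j a) (φ j b) :=
    fun j a b h => by simpa using (hφ j).ne h.ne
  refine ⟨Σ j, ι j, fun p => (f p.1 p.2).map ⟨φ p.1, fun h => hmap p.1 h⟩, fun p => ?_, ?_⟩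
  · obtain ⟨e⟩ := hiso p.1 p.2
    obtain ⟨e2⟩ := coe_iso_map (X := L p.1) ⟨φ p.1, fun h => hmap p.1 h⟩ (hφ p.1) (f p.1 p.2)
    exact ⟨e.trans e2⟩
  · intro e he
    induction e with
    | _ u v =>
      have huv : u ≠ v := by simpa using he
      obtain ⟨j, ⟨a, b, hab, ha, hb⟩, huniq⟩ := hcov u v huv
      have heab : s(a, b) ∈ (L j).edgeSet := hab
      obtain ⟨i, hi, hiuniq⟩ := hpart j _ heab
      have hiadj : (f j i).Adj a b := hi
      refine ⟨⟨j, i⟩, ?_, ?_⟩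
      · show s(u, v) ∈ ((f j i).map ⟨φ j, fun h => hmap j h⟩).edgeSet
        rw [Subgraph.mem_edgeSet, Subgraph.map_adj]
        exact ⟨a, b, hiadj, ha, hb⟩
      · rintro ⟨j', i'⟩ h'
        have h'' : ((f j' i').map ⟨φ j', fun h => hmap j' h⟩).Adj u v := h'
        rw [Subgraph.map_adj] at h''
        obtain ⟨x, y, hxy, hx, hy⟩ := h''
        have hj' : j' = j := huniq j' ⟨x, y, (f j' i').adj_sub hxy, hx, hy⟩
        subst hj'
        have hxa : x = a := hφ j' (hx.trans ha.symm)
        have hyb : y = b := hφ j' (hy.trans hb.symm)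
        subst hxa; subst hyb
        have hii : i' = i := hiuniq i' hxy
        subst hii; rfl

/-- `DecomposesInto` transfers along graph isomorphisms. -/
lemma DecomposesInto.of_iso {A B : Type*} {K : SimpleGraph A} {K' : SimpleGraph B}
    (e : K ≃g K') (h : K.DecomposesInto G) : K'.DecomposesInto G := by
  obtain ⟨ι, f, hiso, hpart⟩ := h
  have inj : Function.Injective ((e : K →g K') : A → B) := e.toEquiv.injective
  refine ⟨ι, fun i => (f i).map (e : K →g K'), fun i => ?_, ?_⟩
  · obtain ⟨e1⟩ := hiso i
    obtain ⟨e2⟩ := coe_iso_map (e : K →g K') inj (f i)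
    exact ⟨e1.trans e2⟩
  · intro ed hed
    induction ed with
    | _ u v =>
      have hadj : K'.Adj u v := by simpa using hed
      have hK : K.Adj (e.symm u) (e.symm v) := by
        have := e.symm.map_adj_iff.mpr hadj
        simpa using this
      obtain ⟨i, hi, hiuniq⟩ := hpart s(e.symm u, e.symm v) hK
      have hiadj : (f i).Adj (e.symm u) (e.symm v) := hi
      refine ⟨i, ?_, ?_⟩
      · show s(u, v) ∈ ((f i).map (e : K →g K')).edgeSet
        rw [Subgraph.mem_edgeSet, Subgraph.map_adj]
        refine ⟨e.symm u, e.symm v, hiadj, ?_, ?_⟩ <;> simp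
      · intro i' h'
        have h'' : ((f i').map (e : K →g K')).Adj u v := h'
        rw [Subgraph.map_adj] at h''
        obtain ⟨x, y, hxy, hx, hy⟩ := h''
        have hx' : x = e.symm u := by apply inj; simp [hx]
        have hy' : y = e.symm v := by apply inj; simp [hy]
        subst hx'; subst hy'
        exact hiuniq i' hxy

lemma top_decomposesInto_of_card_eq {A : Type} {B : Type} [Fintype A] [Fintype B]
    (h : Fintype.card A = Fintype.card B)
    (hd : (⊤ : SimpleGraph A).DecomposesInto G) :
    (⊤ : SimpleGraph B).DecomposesInto G := by
  have e : A ≃ B := Fintype.equivOfCardEq h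
  exact DecomposesInto.of_iso ⟨e, by simp⟩ hd

lemma hasDesign_of_decomp {V : Type} [Fintype V] {n : ℕ}
    (h : Fintype.card V = n)
    (hd : (⊤ : SimpleGraph V).DecomposesInto G) : G.HasDesign n :=
  top_decomposesInto_of_card_eq (by simpa using h) hd

lemma decomp_of_hasDesign {V : Type} [Fintype V] {n : ℕ}
    (h : Fintype.card V = n) (hd : G.HasDesign n) :
    (⊤ : SimpleGraph V).DecomposesInto G :=
  top_decomposesInto_of_card_eq (by simp [h]) hd

lemma hasDesign_zero : G.HasDesign 0 :=
  ⟨Empty, Empty.elim, fun i => i.elim, by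
    intro e he
    induction e with
    | _ u v => exact u.elim0⟩

lemma hasDesign_one : G.HasDesign 1 :=
  ⟨Empty, Empty.elim, fun i => i.elim, by
    intro e he
    induction e with
    | _ u v =>
      have : u ≠ v := by simpa using he
      exact absurd (Subsingleton.elim u v) this⟩

end Theta14
namespace Theta14

variable {V0 : Type*} {G : SimpleGraph V0}

lemma cm_adj {k : ℕ} {m : Fin k → ℕ} {u v : (i : Fin k) × Fin (m i)} :
    (completeMultipartite m).Adj u v ↔ u.1 ≠ v.1 := Iff.rfl

lemma vec5_lt (w : ℕ) (g : Fin 5) (h : (g : ℕ) < 4) : ![7,7,7,7,w] g = 7 := by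
  fin_cases g <;> simp_all

lemma vec5_ge (w : ℕ) (g : Fin 5) (h : ¬ (g : ℕ) < 4) : ![7,7,7,7,w] g = w := by
  fin_cases g <;> simp_all

lemma fin5_eq4 (g : Fin 5) (h : ¬ (g : ℕ) < 4) : g = (4 : Fin 5) := by
  fin_cases g <;> first | rfl | simp_all

/-- The vertex type for the main construction. -/
abbrev VT (M : Type) (x : M → ℕ) (ε : ℕ) : Type :=
  (Fin 4 × M × Fin 7) ⊕ ((Σ q : M, Fin (7 * x q)) ⊕ Fin ε)

/-- Vertex type of the block gadget at block `p`. -/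
abbrev BT {M : Type} (Bf : M × M → Fin 5 → M) (x : M → ℕ) (p : M × M) : Type :=
  (g : Fin 5) × Fin (![7,7,7,7, 7 * x (Bf p 4)] g)

section MainTD

variable {M : Type} (Bf : M × M → Fin 5 → M) (x : M → ℕ) (ε : ℕ)

def φblk (p : M × M) (v : BT Bf x p) : VT M x ε :=
  if h : (v.1 : ℕ) < 4 then Sum.inl (⟨v.1, h⟩, Bf p v.1, Fin.cast (vec5_lt _ _ h) v.2)
  else Sum.inr (Sum.inl ⟨Bf p 4, Fin.cast (vec5_ge _ _ h) v.2⟩)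

def φdes (i : Fin 4) (v : (M × Fin 7) ⊕ Fin ε) : VT M x ε :=
  Sum.elim (fun ct => Sum.inl (i, ct.1, ct.2)) (fun e => Sum.inr (Sum.inr e)) v

def φsup (v : (Σ q : M, Fin (7 * x q)) ⊕ Fin ε) : VT M x ε :=
  Sum.elim (fun s => Sum.inr (Sum.inl s)) (fun e => Sum.inr (Sum.inr e)) v

lemma φblk_inj (p : M × M) : Function.Injective (φblk Bf x (ε := ε) p) := by
  rintro ⟨g, t⟩ ⟨g', t'⟩ h
  unfold φblk at h
  by_cases h1 : (g : ℕ) < 4 <;> by_cases h2 : (g' : ℕ) < 4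
  · rw [dif_pos h1, dif_pos h2] at h
    simp only [Sum.inl.injEq, Prod.mk.injEq] at h
    obtain ⟨hg, -, ht⟩ := h
    have hgg : g = g' := by
      apply Fin.ext
      have := congrArg Fin.val hg
      simpa using this
    subst hgg
    have : t = t' := by
      apply Fin.ext
      have := congrArg Fin.val ht
      simpa using this
    rw [this]
  · rw [dif_pos h1, dif_neg h2] at h; exact absurd h (by simp)
  · rw [dif_neg h1, dif_pos h2] at h; exact absurd h (by simp)
  · rw [dif_neg h1, dif_neg h2] at h
    simp only [Sum.inr.injEq, Sum.inl.injEq, Sigma.mk.inj_iff, heq_eq_eq, true_and] at h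
    have hgg : g = g' := (fin5_eq4 g h1).trans (fin5_eq4 g' h2).symm
    subst hgg
    have : t = t' := by
      apply Fin.ext
      have := congrArg Fin.val h
      simpa using this
    rw [this]

lemma φdes_inj (i : Fin 4) : Function.Injective (φdes x ε i) := by
  rintro (⟨c, t⟩ | e) (⟨c', t'⟩ | e') h <;> simp [φdes] at h <;> simp_all

lemma φsup_inj : Function.Injective (φsup x ε) := by
  rintro (s | e) (s' | e') h <;> simp [φsup] at h <;> simp_all

end MainTD

end Theta14
namespace Theta14

variable {V0 : Type*} {G : SimpleGraph V0}

section MainTD2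

variable {M : Type} (Bf : M × M → Fin 5 → M) (x : M → ℕ) (ε : ℕ)

lemma φblk_app_lt (p : M × M) (g : Fin 5) (h : (g : ℕ) < 4) (t : Fin 7) :
    φblk Bf x ε p ⟨g, Fin.cast (vec5_lt _ g h).symm t⟩ = Sum.inl (⟨g, h⟩, Bf p g, t) := by
  unfold φblk
  rw [dif_pos h]
  rfl

lemma φblk_app_4 (p : M × M) (s : Fin (![7,7,7,7, 7 * x (Bf p 4)] (4 : Fin 5))) :
    φblk Bf x ε p ⟨(4 : Fin 5), s⟩ =
      Sum.inr (Sum.inl ⟨Bf p 4, Fin.cast (vec5_ge _ _ (by decide)) s⟩) := by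
  unfold φblk
  rw [dif_neg (by decide : ¬ ((4 : Fin 5) : ℕ) < 4)]

lemma φblk_eq_inl (p : M × M) (w : BT Bf x p) {i : Fin 4} {c : M} {t : Fin 7}
    (h : φblk Bf x ε p w = Sum.inl (i, c, t)) :
    (w.1 : ℕ) = (i : ℕ) ∧ c = Bf p w.1 := by
  unfold φblk at h
  by_cases h4 : (w.1 : ℕ) < 4
  · rw [dif_pos h4] at h
    simp only [Sum.inl.injEq, Prod.mk.injEq] at h
    exact ⟨by rw [← h.1], h.2.1.symm⟩
  · rw [dif_neg h4] at h
    exact absurd h (by simp)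

lemma φblk_eq_sup (p : M × M) (w : BT Bf x p) {z : Σ q : M, Fin (7 * x q)}
    (h : φblk Bf x ε p w = Sum.inr (Sum.inl z)) :
    ¬ (w.1 : ℕ) < 4 ∧ z.1 = Bf p 4 := by
  unfold φblk at h
  by_cases h4 : (w.1 : ℕ) < 4
  · rw [dif_pos h4] at h
    exact absurd h (by simp)
  · rw [dif_neg h4] at h
    simp only [Sum.inr.injEq, Sum.inl.injEq] at h
    exact ⟨h4, by rw [← h]⟩

lemma φblk_ne_inf (p : M × M) (w : BT Bf x p) (e : Fin ε) :
    φblk Bf x ε p w ≠ Sum.inr (Sum.inr e) := by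
  unfold φblk
  by_cases h4 : (w.1 : ℕ) < 4
  · rw [dif_pos h4]; simp
  · rw [dif_neg h4]; simp

lemma φdes_eq_inl {i i' : Fin 4} {c : M} {t : Fin 7} (w : (M × Fin 7) ⊕ Fin ε)
    (h : φdes x ε i w = Sum.inl (i', c, t)) : i = i' ∧ w = Sum.inl (c, t) := by
  rcases w with ⟨c', t'⟩ | e <;> simp [φdes] at h ⊢
  · exact ⟨h.1, h.2.1, h.2.2⟩

lemma φdes_ne_sup {i : Fin 4} (w : (M × Fin 7) ⊕ Fin ε) (z : Σ q : M, Fin (7 * x q)) :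
    φdes x ε i w ≠ Sum.inr (Sum.inl z) := by
  rcases w with ⟨c', t'⟩ | e <;> simp [φdes]

lemma φdes_eq_inf {i : Fin 4} (w : (M × Fin 7) ⊕ Fin ε) (e : Fin ε)
    (h : φdes x ε i w = Sum.inr (Sum.inr e)) : w = Sum.inr e := by
  rcases w with ⟨c', t'⟩ | e' <;> simp [φdes] at h ⊢
  exact h

lemma φsup_ne_inl (w : (Σ q : M, Fin (7 * x q)) ⊕ Fin ε) (z : Fin 4 × M × Fin 7) :
    φsup x ε w ≠ Sum.inl z := by
  rcases w with s | e <;> simp [φsup]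

end MainTD2

end Theta14
namespace Theta14

variable {V0 : Type*} {G : SimpleGraph V0}

lemma vec5_lt' (a b c d e : ℕ) (g : Fin 5) (h : (g : ℕ) < 4) :
    ![a,b,c,d,e] g = ![a,b,c,d] ⟨(g : ℕ), h⟩ := by
  rcases g with ⟨gv, hgv⟩
  interval_cases gv <;> rfl

lemma vec5_at4 (a b c d e : ℕ) (g : Fin 5) (h : ¬ (g : ℕ) < 4) : ![a,b,c,d,e] g = e := by
  rcases g with ⟨gv, hgv⟩
  interval_cases gv <;> rfl

/-- Dropping an empty fifth part. -/
lemma decomp_five_zero {a b c d : ℕ}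
    (h : (completeMultipartite ![a,b,c,d]).DecomposesInto G) :
    (completeMultipartite ![a,b,c,d,0]).DecomposesInto G := by
  refine DecomposesInto.of_iso
    ⟨⟨fun v => ⟨v.1.castSucc,
        Fin.cast (vec5_lt' a b c d 0 v.1.castSucc (by simpa using v.1.isLt)).symm v.2⟩,
      fun w =>
        if h4 : (w.1 : ℕ) < 4 then ⟨⟨(w.1 : ℕ), h4⟩, Fin.cast (vec5_lt' a b c d 0 w.1 h4) w.2⟩
        else (Fin.cast (vec5_at4 a b c d 0 w.1 h4) w.2).elim0,
      ?_, ?_⟩, ?_⟩ h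
  · rintro ⟨i, t⟩
    fin_cases i <;> rfl
  · rintro ⟨g, t⟩
    fin_cases g <;> first | rfl | exact (Fin.cast (by rfl) t).elim0
  · rintro ⟨i, t⟩ ⟨i', t'⟩
    show i.castSucc ≠ i'.castSucc ↔ i ≠ i'
    exact not_congr Fin.castSucc_inj

lemma fin5_cs_ne4 (i : Fin 4) : i.castSucc ≠ (4 : Fin 5) := by
  intro hcs
  have h := congrArg Fin.val hcs
  rw [Fin.coe_castSucc] at h
  have h4 : ((4 : Fin 5) : ℕ) = 4 := rfl
  rw [h4] at h
  have := i.isLt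
  omega

lemma main_td
    (hB : (completeMultipartite ![7,7,7,7]).DecomposesInto G)
    (hD : (completeMultipartite ![7,7,7,7,7]).DecomposesInto G)
    (hE : (completeMultipartite ![7,7,7,7,21]).DecomposesInto G)
    (hF : (completeMultipartite ![7,7,7,7,28]).DecomposesInto G)
    (M : Type) [Fintype M]
    (Bf : M × M → Fin 5 → M)
    (hTD : ∀ g g' : Fin 5, g ≠ g' → ∀ a b : M, ∃! p, Bf p g = a ∧ Bf p g' = b)
    (x : M → ℕ) (hx : ∀ q, x q = 0 ∨ x q = 1 ∨ x q = 3 ∨ x q = 4)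
    (ε : ℕ) (hε : ε ≤ 1)
    (hdm : G.HasDesign (7 * Fintype.card M + ε))
    (hdy : G.HasDesign (7 * (∑ q, x q) + ε)) :
    G.HasDesign (28 * Fintype.card M + 7 * (∑ q, x q) + ε) := by
  classical
  have hcard : Fintype.card (VT M x ε) = 28 * Fintype.card M + 7 * (∑ q, x q) + ε := by
    simp only [VT, Fintype.card_sum, Fintype.card_prod, Fintype.card_fin, Fintype.card_sigma]
    rw [← Finset.mul_sum]
    ring
  apply hasDesign_of_decomp hcard
  refine top_decomposesInto_of_cover
    (J := (Fin 4 ⊕ Unit) ⊕ (M × M))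
    (P := fun j => match j with
      | .inl (.inl _) => (M × Fin 7) ⊕ Fin ε
      | .inl (.inr _) => ((q : M) × Fin (7 * x q)) ⊕ Fin ε
      | .inr p => BT Bf x p)
    (L := fun j => match j with
      | .inl (.inl _) => ⊤
      | .inl (.inr _) => ⊤
      | .inr p => completeMultipartite ![7,7,7,7, 7 * x (Bf p 4)])
    (φ := fun j => match j with
      | .inl (.inl i) => φdes x ε i
      | .inl (.inr _) => φsup x ε
      | .inr p => φblk Bf x ε p)
    ?_ ?_ ?_
  · rintro ((i | u) | p)
    · exact φdes_inj x ε i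
    · exact φsup_inj x ε
    · exact φblk_inj Bf x ε p
  · rintro ((i | u) | p)
    · exact decomp_of_hasDesign (by simp [Fintype.card_sum, Fintype.card_prod, mul_comm]) hdm
    · refine decomp_of_hasDesign ?_ hdy
      simp only [Fintype.card_sum, Fintype.card_sigma, Fintype.card_fin]
      rw [← Finset.mul_sum]
    · show (completeMultipartite ![7,7,7,7, 7 * x (Bf p 4)]).DecomposesInto G
      rcases hx (Bf p 4) with h | h | h | h <;> rw [h]
      · exact decomp_five_zero hB
      · exact hD
      · exact hE
      · exact hF
  · rintro (⟨i, a, t⟩ | (⟨q, s⟩ | e)) (⟨i', a', t'⟩ | (⟨q', s'⟩ | e')) huv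
    · -- group vs group
      by_cases hii : i = i'
      · subst hii
        refine ⟨Sum.inl (Sum.inl i), ⟨Sum.inl (a, t), Sum.inl (a', t'), ?_, rfl, rfl⟩, ?_⟩
        · show Sum.inl (a, t) ≠ Sum.inl (a', t')
          intro hct
          apply huv
          simp only [Sum.inl.injEq, Prod.mk.injEq] at hct
          rw [hct.1, hct.2]
        · rintro ((i'' | u'') | p') ⟨wa, wb, hadj, ha, hb⟩
          · obtain ⟨h1, -⟩ := φdes_eq_inl x ε wa ha
            rw [h1]
          · exact absurd ha (φsup_ne_inl x ε wa _)
          · obtain ⟨hv1, -⟩ := φblk_eq_inl Bf x ε p' wa ha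
            obtain ⟨hv2, -⟩ := φblk_eq_inl Bf x ε p' wb hb
            exact absurd (Fin.ext (hv1.trans hv2.symm) : wa.1 = wb.1) hadj
      · -- different groups: block
        have hne : i.castSucc ≠ i'.castSucc := fun hcs => hii (Fin.castSucc_inj.mp hcs)
        obtain ⟨p₀, ⟨hp1, hp2⟩, hpu⟩ := hTD i.castSucc i'.castSucc hne a a'
        have hlt : ((i.castSucc : Fin 5) : ℕ) < 4 := by simpa using i.isLt
        have hlt' : ((i'.castSucc : Fin 5) : ℕ) < 4 := by simpa using i'.isLt
        refine ⟨Sum.inr p₀,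
          ⟨⟨i.castSucc, Fin.cast (vec5_lt _ _ hlt).symm t⟩,
           ⟨i'.castSucc, Fin.cast (vec5_lt _ _ hlt').symm t'⟩, hne, ?_, ?_⟩, ?_⟩
        · have hφ := φblk_app_lt Bf x ε p₀ i.castSucc hlt t
          rw [hp1] at hφ
          exact hφ
        · have hφ := φblk_app_lt Bf x ε p₀ i'.castSucc hlt' t'
          rw [hp2] at hφ
          exact hφ
        · rintro ((i'' | u'') | p') ⟨wa, wb, hadj, ha, hb⟩
          · obtain ⟨h1, -⟩ := φdes_eq_inl x ε wa ha
            obtain ⟨h2, -⟩ := φdes_eq_inl x ε wb hb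
            exact absurd (h1.symm.trans h2) hii
          · exact absurd ha (φsup_ne_inl x ε wa _)
          · obtain ⟨hv1, hc1⟩ := φblk_eq_inl Bf x ε p' wa ha
            obtain ⟨hv2, hc2⟩ := φblk_eq_inl Bf x ε p' wb hb
            have e1 : Bf p' i.castSucc = a := by
              have hw : wa.1 = i.castSucc := Fin.ext (by simpa using hv1)
              rw [← hw]; exact hc1.symm
            have e2 : Bf p' i'.castSucc = a' := by
              have hw : wb.1 = i'.castSucc := Fin.ext (by simpa using hv2)
              rw [← hw]; exact hc2.symm
            rw [hpu p' ⟨e1, e2⟩]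
    · -- group vs super: block
      have hne : i.castSucc ≠ (4 : Fin 5) := fin5_cs_ne4 i
      obtain ⟨p₀, ⟨hp1, hp2⟩, hpu⟩ := hTD i.castSucc 4 hne a q'
      subst hp2
      have hlt : ((i.castSucc : Fin 5) : ℕ) < 4 := by simpa using i.isLt
      refine ⟨Sum.inr p₀,
        ⟨⟨i.castSucc, Fin.cast (vec5_lt _ _ hlt).symm t⟩, ⟨(4 : Fin 5), s'⟩, hne, ?_, ?_⟩, ?_⟩
      · have hφ := φblk_app_lt Bf x ε p₀ i.castSucc hlt t
        rw [hp1] at hφ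
        exact hφ
      · exact φblk_app_4 Bf x ε p₀ s'
      · rintro ((i'' | u'') | p') ⟨wa, wb, hadj, ha, hb⟩
        · exact absurd hb (φdes_ne_sup x ε wb _)
        · exact absurd ha (φsup_ne_inl x ε wa _)
        · obtain ⟨hv1, hc1⟩ := φblk_eq_inl Bf x ε p' wa ha
          obtain ⟨-, hc2⟩ := φblk_eq_sup Bf x ε p' wb hb
          have e1 : Bf p' i.castSucc = a := by
            have hw : wa.1 = i.castSucc := Fin.ext (by simpa using hv1)
            rw [← hw]; exact hc1.symm
          rw [hpu p' ⟨e1, hc2.symm⟩]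
    · -- group vs infinity: design i
      refine ⟨Sum.inl (Sum.inl i), ⟨Sum.inl (a, t), Sum.inr e', ?_, rfl, rfl⟩, ?_⟩
      · show Sum.inl (a, t) ≠ Sum.inr e'
        simp
      · rintro ((i'' | u'') | p') ⟨wa, wb, hadj, ha, hb⟩
        · obtain ⟨h1, -⟩ := φdes_eq_inl x ε wa ha
          rw [h1]
        · exact absurd ha (φsup_ne_inl x ε wa _)
        · exact absurd hb (φblk_ne_inf Bf x ε p' wb e')
    · -- super vs group: block
      have hne : i'.castSucc ≠ (4 : Fin 5) := fin5_cs_ne4 i'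
      obtain ⟨p₀, ⟨hp1, hp2⟩, hpu⟩ := hTD i'.castSucc 4 hne a' q
      subst hp2
      have hlt : ((i'.castSucc : Fin 5) : ℕ) < 4 := by simpa using i'.isLt
      refine ⟨Sum.inr p₀,
        ⟨⟨(4 : Fin 5), s⟩, ⟨i'.castSucc, Fin.cast (vec5_lt _ _ hlt).symm t'⟩, hne.symm, ?_, ?_⟩, ?_⟩
      · exact φblk_app_4 Bf x ε p₀ s
      · have hφ := φblk_app_lt Bf x ε p₀ i'.castSucc hlt t'
        rw [hp1] at hφ
        exact hφ
      · rintro ((i'' | u'') | p') ⟨wa, wb, hadj, ha, hb⟩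
        · exact absurd ha (φdes_ne_sup x ε wa _)
        · exact absurd hb (φsup_ne_inl x ε wb _)
        · obtain ⟨-, hc2⟩ := φblk_eq_sup Bf x ε p' wa ha
          obtain ⟨hv1, hc1⟩ := φblk_eq_inl Bf x ε p' wb hb
          have e1 : Bf p' i'.castSucc = a' := by
            have hw : wb.1 = i'.castSucc := Fin.ext (by simpa using hv1)
            rw [← hw]; exact hc1.symm
          rw [hpu p' ⟨e1, hc2.symm⟩]
    · -- super vs super
      refine ⟨Sum.inl (Sum.inr ()), ⟨Sum.inl ⟨q, s⟩, Sum.inl ⟨q', s'⟩, ?_, rfl, rfl⟩, ?_⟩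
      · show Sum.inl (⟨q, s⟩ : (q : M) × Fin (7 * x q)) ≠ Sum.inl ⟨q', s'⟩
        intro hqq
        apply huv
        simp only [Sum.inl.injEq] at hqq
        rw [hqq]
      · rintro ((i'' | u'') | p') ⟨wa, wb, hadj, ha, hb⟩
        · exact absurd ha (φdes_ne_sup x ε wa _)
        · rfl
        · obtain ⟨h1, -⟩ := φblk_eq_sup Bf x ε p' wa ha
          obtain ⟨h2, -⟩ := φblk_eq_sup Bf x ε p' wb hb
          exact absurd ((fin5_eq4 wa.1 h1).trans (fin5_eq4 wb.1 h2).symm) hadj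
    · -- super vs infinity
      refine ⟨Sum.inl (Sum.inr ()), ⟨Sum.inl ⟨q, s⟩, Sum.inr e', ?_, rfl, rfl⟩, ?_⟩
      · show Sum.inl (⟨q, s⟩ : (q : M) × Fin (7 * x q)) ≠ Sum.inr e'
        simp
      · rintro ((i'' | u'') | p') ⟨wa, wb, hadj, ha, hb⟩
        · exact absurd ha (φdes_ne_sup x ε wa _)
        · rfl
        · exact absurd hb (φblk_ne_inf Bf x ε p' wb e')
    · -- infinity vs group
      refine ⟨Sum.inl (Sum.inl i'), ⟨Sum.inr e, Sum.inl (a', t'), ?_, rfl, rfl⟩, ?_⟩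
      · show Sum.inr e ≠ Sum.inl (a', t')
        simp
      · rintro ((i'' | u'') | p') ⟨wa, wb, hadj, ha, hb⟩
        · obtain ⟨h1, -⟩ := φdes_eq_inl x ε wb hb
          rw [h1]
        · exact absurd hb (φsup_ne_inl x ε wb _)
        · exact absurd ha (φblk_ne_inf Bf x ε p' wa e)
    · -- infinity vs super
      refine ⟨Sum.inl (Sum.inr ()), ⟨Sum.inr e, Sum.inl ⟨q', s'⟩, ?_, rfl, rfl⟩, ?_⟩
      · show Sum.inr e ≠ Sum.inl (⟨q', s'⟩ : (q : M) × Fin (7 * x q))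
        simp
      · rintro ((i'' | u'') | p') ⟨wa, wb, hadj, ha, hb⟩
        · exact absurd hb (φdes_ne_sup x ε wb _)
        · rfl
        · exact absurd ha (φblk_ne_inf Bf x ε p' wa e)
    · -- infinity vs infinity: impossible
      exfalso
      apply huv
      have h1 := e.isLt
      have h2 := e'.isLt
      have : e = e' := Fin.ext (by omega)
      rw [this]

end Theta14
namespace Theta14

variable {V0 : Type*} {G : SimpleGraph V0}

def IsTD {M : Type} (B : M × M → Fin 5 → M) : Prop :=
  ∀ g g' : Fin 5, g ≠ g' → ∀ a b : M, ∃! p, B p g = a ∧ B p g' = b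

def TDgood (m : ℕ) : Prop :=
  ∃ (M : Type) (_ : Fintype M) (B : M × M → Fin 5 → M), Fintype.card M = m ∧ IsTD B

lemma isTD_of_det {F : Type} [Field F] (d c : Fin 5 → F)
    (hdet : ∀ g g' : Fin 5, g ≠ g' → d g * c g' - d g' * c g ≠ 0) :
    IsTD (fun (p : F × F) (g : Fin 5) => d g * p.1 + c g * p.2) := by
  intro g g' hgg a b
  have hΔ : d g * c g' - d g' * c g ≠ 0 := hdet g g' hgg
  set Δ := d g * c g' - d g' * c g with hΔdef
  refine ⟨((a * c g' - b * c g) / Δ, (d g * b - d g' * a) / Δ), ⟨?_, ?_⟩, ?_⟩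
  · field_simp
    ring
  · field_simp
    ring
  · rintro ⟨u, v⟩ ⟨e1, e2⟩
    simp only at e1 e2
    have hu : u = (a * c g' - b * c g) / Δ := by
      field_simp
      linear_combination c g' * e1 - c g * e2
    have hv : v = (d g * b - d g' * a) / Δ := by
      field_simp
      linear_combination d g * e2 - d g' * e1
    rw [Prod.ext_iff]
    exact ⟨hu, hv⟩

lemma isTD_of_field (F : Type) [Field F] (c2 c3 c4 : F)
    (h2 : c2 ≠ 0) (h3 : c3 ≠ 0) (h4 : c4 ≠ 0)
    (h23 : c2 ≠ c3) (h24 : c2 ≠ c4) (h34 : c3 ≠ c4) :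
    IsTD (fun (p : F × F) (g : Fin 5) =>
      ![(1:F),0,1,1,1] g * p.1 + ![(0:F),1,c2,c3,c4] g * p.2) := by
  apply isTD_of_det
  intro g g' hgg
  fin_cases g <;> fin_cases g' <;>
    simp_all [sub_ne_zero] <;>
    first
      | exact fun hh => h23 hh.symm
      | exact fun hh => h24 hh.symm
      | exact fun hh => h34 hh.symm

lemma exists_three_nonzero (F : Type) [Field F] [Fintype F] (h : 4 ≤ Fintype.card F) :
    ∃ c2 c3 c4 : F, c2 ≠ 0 ∧ c3 ≠ 0 ∧ c4 ≠ 0 ∧ c2 ≠ c3 ∧ c2 ≠ c4 ∧ c3 ≠ c4 := by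
  classical
  have hcard : 3 ≤ (Finset.univ.erase (0 : F)).card := by
    rw [Finset.card_erase_of_mem (Finset.mem_univ _), Finset.card_univ]
    omega
  obtain ⟨t, ht, htc⟩ := Finset.exists_subset_card_eq hcard
  obtain ⟨x, y, z, hxy, hxz, hyz, rfl⟩ := Finset.card_eq_three.mp htc
  have hx : x ≠ 0 := Finset.ne_of_mem_erase (ht (by simp))
  have hy : y ≠ 0 := Finset.ne_of_mem_erase (ht (by simp))
  have hz : z ≠ 0 := Finset.ne_of_mem_erase (ht (by simp))
  exact ⟨x, y, z, hx, hy, hz, hxy, hxz, hyz⟩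

lemma tdgood_of_field (F : Type) [Field F] [Fintype F] (h : 4 ≤ Fintype.card F) :
    TDgood (Fintype.card F) := by
  obtain ⟨c2, c3, c4, h2, h3, h4, h23, h24, h34⟩ := exists_three_nonzero F h
  exact ⟨F, inferInstance, _, rfl, isTD_of_field F c2 c3 c4 h2 h3 h4 h23 h24 h34⟩

lemma TDgood.mul {m m' : ℕ} (h : TDgood m) (h' : TDgood m') : TDgood (m * m') := by
  obtain ⟨M, fM, B, hcard, hTD⟩ := h
  obtain ⟨N, fN, C, hcard', hTD'⟩ := h'
  refine ⟨M × N, inferInstance,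
    fun p g => (B (p.1.1, p.2.1) g, C (p.1.2, p.2.2) g), ?_, ?_⟩
  · rw [Fintype.card_prod, hcard, hcard']
  · intro g g' hgg a b
    obtain ⟨⟨pB1, pB2⟩, ⟨hB1, hB2⟩, hBu⟩ := hTD g g' hgg a.1 b.1
    obtain ⟨⟨pC1, pC2⟩, ⟨hC1, hC2⟩, hCu⟩ := hTD' g g' hgg a.2 b.2
    refine ⟨((pB1, pC1), (pB2, pC2)), ⟨?_, ?_⟩, ?_⟩
    · exact Prod.ext hB1 hC1
    · exact Prod.ext hB2 hC2
    · rintro ⟨⟨u1, u2⟩, ⟨v1, v2⟩⟩ ⟨e1, e2⟩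
      have hB' : (u1, v1) = (pB1, pB2) :=
        hBu (u1, v1) ⟨congrArg Prod.fst e1, congrArg Prod.fst e2⟩
      have hC' : (u2, v2) = (pC1, pC2) :=
        hCu (u2, v2) ⟨congrArg Prod.snd e1, congrArg Prod.snd e2⟩
      simp only [Prod.mk.injEq] at hB' hC' ⊢
      exact ⟨⟨hB'.1, hC'.1⟩, hB'.2, hC'.2⟩

lemma tdgood_4 : TDgood 4 := by
  haveI : Fact (Nat.Prime 2) := ⟨by norm_num⟩
  haveI : Fintype (GaloisField 2 2) := Fintype.ofFinite _
  have hc : Fintype.card (GaloisField 2 2) = 4 := by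
    have := GaloisField.card 2 2 (by norm_num)
    rwa [Nat.card_eq_fintype_card] at this
  have := tdgood_of_field (GaloisField 2 2) (by omega)
  rwa [hc] at this

lemma tdgood_5 : TDgood 5 := by
  haveI : Fact (Nat.Prime 5) := ⟨by norm_num⟩
  have hc : Fintype.card (ZMod 5) = 5 := by simp
  have := tdgood_of_field (ZMod 5) (by omega)
  rwa [hc] at this

lemma tdgood_8 : TDgood 8 := by
  haveI : Fact (Nat.Prime 2) := ⟨by norm_num⟩
  haveI : Fintype (GaloisField 2 3) := Fintype.ofFinite _
  have hc : Fintype.card (GaloisField 2 3) = 8 := by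
    have := GaloisField.card 2 3 (by norm_num)
    rwa [Nat.card_eq_fintype_card] at this
  have := tdgood_of_field (GaloisField 2 3) (by omega)
  rwa [hc] at this

lemma tdgood_9 : TDgood 9 := by
  haveI : Fact (Nat.Prime 3) := ⟨by norm_num⟩
  haveI : Fintype (GaloisField 3 2) := Fintype.ofFinite _
  have hc : Fintype.card (GaloisField 3 2) = 9 := by
    have := GaloisField.card 3 2 (by norm_num)
    rwa [Nat.card_eq_fintype_card] at this
  have := tdgood_of_field (GaloisField 3 2) (by omega)
  rwa [hc] at this

lemma tdgood_mul4pow {m : ℕ} (h : TDgood m) (i : ℕ) : TDgood (m * 4 ^ i) := by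
  induction i with
  | zero => simpa using h
  | succ n ih =>
    have := ih.mul tdgood_4
    rwa [mul_assoc, ← pow_succ] at this

end Theta14
namespace Theta14

variable {V0 : Type*} {G : SimpleGraph V0}

lemma sum_weight (a r m : ℕ) (h : a < m ∨ (a = m ∧ r = 0)) :
    (∑ i ∈ Finset.range m, if i < a then 4 else if i = a then r else 0) = 4 * a + r := by
  have ham : a ≤ m := by omega
  rw [Finset.sum_ite]
  have hfilt : (Finset.range m).filter (fun i => i < a) = Finset.range a := by
    ext i
    simp only [Finset.mem_filter, Finset.mem_range]
    omega
  rw [hfilt, Finset.sum_const, Finset.card_range, smul_eq_mul, mul_comm a 4]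
  congr 1
  rw [Finset.sum_ite_eq' ((Finset.range m).filter _) a (fun _ => r)]
  rcases h with h | ⟨rfl, rfl⟩
  · rw [if_pos]
    simp only [Finset.mem_filter, Finset.mem_range]
    omega
  · rw [if_neg]
    simp only [Finset.mem_filter, Finset.mem_range]
    omega

/-- The master step: a transversal design of order `m` with a weighted truncated group. -/
lemma design_step
    (hB : (completeMultipartite ![7,7,7,7]).DecomposesInto G)
    (hD : (completeMultipartite ![7,7,7,7,7]).DecomposesInto G)
    (hE : (completeMultipartite ![7,7,7,7,21]).DecomposesInto G)
    (hF : (completeMultipartite ![7,7,7,7,28]).DecomposesInto G)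
    (m y ε : ℕ) (hTD : TDgood m) (hy : y ≤ 4 * m) (hr : y % 4 ≠ 2) (hε : ε ≤ 1)
    (hdm : G.HasDesign (7 * m + ε)) (hdy : G.HasDesign (7 * y + ε)) :
    G.HasDesign (28 * m + 7 * y + ε) := by
  classical
  obtain ⟨M, fM, Bf, hcard, histd⟩ := hTD
  haveI := fM
  have hcard2 : Fintype.card M = m := by
    convert hcard using 2
  set a := y / 4 with ha
  set r := y % 4 with hrr
  have hy4 : y = 4 * a + r := by omega
  have e : M ≃ Fin m := Fintype.equivFinOfCardEq hcard2
  set x : M → ℕ := fun v => if ((e v : Fin m) : ℕ) < a then 4 else if ((e v : Fin m) : ℕ) = a then r else 0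
    with hx
  have hxval : ∀ q, x q = 0 ∨ x q = 1 ∨ x q = 3 ∨ x q = 4 := by
    intro q
    rw [hx]
    have : r = 0 ∨ r = 1 ∨ r = 3 := by omega
    dsimp only
    split
    · right; right; right; rfl
    · split
      · omega
      · left; rfl
  have hsum : (∑ q, x q) = y := by
    rw [hx]
    rw [Fintype.sum_equiv e _ (fun i => if (i : ℕ) < a then 4 else if (i : ℕ) = a then r else 0)
      (fun q => rfl)]
    rw [Fin.sum_univ_eq_sum_range (fun i => if i < a then 4 else if i = a then r else 0) m]
    rw [sum_weight a r m ?_, hy4]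
    rcases Nat.lt_or_ge a m with h | h
    · exact Or.inl h
    · right
      constructor <;> omega
  have := main_td hB hD hE hF M Bf histd x hxval ε hε ?_ ?_
  · rwa [hcard2, hsum] at this
  · rwa [hcard2]
  · rwa [hsum]

end Theta14
namespace Theta14

variable {V0 : Type*} {G : SimpleGraph V0}

lemma uniform_gdd (bk wt : ℕ)
    (hgad : (completeMultipartite (fun _ : Fin bk => wt)).DecomposesInto G)
    (P : Type) [Fintype P] (k : ℕ) (γ : P → Fin k)
    (nb : ℕ) (β : Fin nb → Fin bk → P)
    (hβγ : ∀ t s s', s ≠ s' → γ (β t s) ≠ γ (β t s'))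
    (hcov : ∀ p q : P, γ p ≠ γ q →
      ∃ t, (∃ s s', β t s = p ∧ β t s' = q) ∧
        ∀ t', (∃ s s', β t' s = p ∧ β t' s' = q) → t' = t)
    (ε : ℕ) (hε : ε ≤ 1)
    (hdes : ∀ i : Fin k, G.HasDesign (wt * Fintype.card {p // γ p = i} + ε)) :
    G.HasDesign (wt * Fintype.card P + ε) := by
  classical
  have hcard : Fintype.card ((P × Fin wt) ⊕ Fin ε) = wt * Fintype.card P + ε := by
    simp [mul_comm]
  apply hasDesign_of_decomp hcard
  refine top_decomposesInto_of_cover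
    (J := Fin k ⊕ Fin nb)
    (P := fun j => match j with
      | .inl i => ({p // γ p = i} × Fin wt) ⊕ Fin ε
      | .inr _ => (s : Fin bk) × Fin wt)
    (L := fun j => match j with
      | .inl _ => ⊤
      | .inr _ => completeMultipartite (fun _ : Fin bk => wt))
    (φ := fun j => match j with
      | .inl i => Sum.elim (fun pr => Sum.inl (pr.1.1, pr.2)) (fun e => Sum.inr e)
      | .inr t => fun v => Sum.inl (β t v.1, v.2))
    ?_ ?_ ?_
  · rintro (i | t)
    · rintro (⟨⟨p, hp⟩, r⟩ | e) (⟨⟨p', hp'⟩, r'⟩ | e') h <;>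
        simp only [Sum.elim_inl, Sum.elim_inr, Sum.inl.injEq, Sum.inr.injEq,
          Prod.mk.injEq] at h
      · rcases h with ⟨h1, h2⟩
        subst h1; subst h2; rfl
      · exact absurd h (by simp)
      · exact absurd h (by simp)
      · rw [h]
    · rintro ⟨s, r⟩ ⟨s', r'⟩ h
      simp only [Sum.inl.injEq, Prod.mk.injEq] at h
      rcases h with ⟨h1, h2⟩
      have hss : s = s' := by
        by_contra hne
        exact hβγ t s s' hne (by rw [h1])
      subst hss; subst h2; rfl
  · rintro (i | t)
    · refine decomp_of_hasDesign ?_ (hdes i)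
      simp [mul_comm]
    · exact hgad
  · rintro (⟨p, r⟩ | e) (⟨p', r'⟩ | e') huv
    · -- point-point
      by_cases hγ : γ p = γ p'
      · refine ⟨Sum.inl (γ p), ⟨Sum.inl (⟨p, rfl⟩, r), Sum.inl (⟨p', hγ.symm⟩, r'), ?_, rfl, rfl⟩, ?_⟩
        · show Sum.inl ((⟨p, rfl⟩ : {q // γ q = γ p}), r) ≠ Sum.inl (⟨p', hγ.symm⟩, r')
          intro hcontra
          apply huv
          simp only [Sum.inl.injEq, Prod.mk.injEq, Subtype.mk.injEq] at hcontra
          rw [hcontra.1, hcontra.2]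
        · rintro (i'' | t') ⟨wa, wb, hadj, ha, hb⟩
          · rcases wa with ⟨⟨pp, hpp⟩, rr⟩ | e
            · simp only [Sum.elim_inl, Sum.inl.injEq, Prod.mk.injEq] at ha
              rw [← hpp, ha.1]
            · exact absurd ha (by simp)
          · simp only [Sum.inl.injEq, Prod.mk.injEq] at ha hb
            exact absurd (hβγ t' wa.1 wb.1 hadj) (by rw [ha.1, hb.1]; exact fun hh => hh hγ)
      · obtain ⟨t₀, ⟨s, s', hs, hs'⟩, htu⟩ := hcov p p' hγ
        have hss : s ≠ s' := by
          intro hcontra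
          apply hγ
          rw [← hs, ← hs', hcontra]
        refine ⟨Sum.inr t₀, ⟨⟨s, r⟩, ⟨s', r'⟩, hss, ?_, ?_⟩, ?_⟩
        · show Sum.inl (β t₀ s, r) = Sum.inl (p, r)
          rw [hs]
        · show Sum.inl (β t₀ s', r') = Sum.inl (p', r')
          rw [hs']
        · rintro (i'' | t') ⟨wa, wb, hadj, ha, hb⟩
          · rcases wa with ⟨⟨pp, hpp⟩, rr⟩ | e <;>
              rcases wb with ⟨⟨qq, hqq⟩, ss⟩ | e'
            · simp only [Sum.elim_inl, Sum.inl.injEq, Prod.mk.injEq] at ha hb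
              exact absurd (by rw [← ha.1, ← hb.1, hpp, hqq]) hγ
            · exact absurd hb (by simp)
            · exact absurd ha (by simp)
            · exact absurd ha (by simp)
          · simp only [Sum.inl.injEq, Prod.mk.injEq] at ha hb
            have := htu t' ⟨wa.1, wb.1, ha.1, hb.1⟩
            rw [this]
    · -- point-infinity
      refine ⟨Sum.inl (γ p), ⟨Sum.inl (⟨p, rfl⟩, r), Sum.inr e', ?_, rfl, rfl⟩, ?_⟩
      · show Sum.inl ((⟨p, rfl⟩ : {q // γ q = γ p}), r) ≠ Sum.inr e'
        simp
      · rintro (i'' | t') ⟨wa, wb, hadj, ha, hb⟩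
        · rcases wa with ⟨⟨pp, hpp⟩, rr⟩ | e
          · simp only [Sum.elim_inl, Sum.inl.injEq, Prod.mk.injEq] at ha
            rw [← hpp, ha.1]
          · exact absurd ha (by simp)
        · exact absurd hb (by simp)
    · -- infinity-point
      refine ⟨Sum.inl (γ p'), ⟨Sum.inr e, Sum.inl (⟨p', rfl⟩, r'), ?_, rfl, rfl⟩, ?_⟩
      · show Sum.inr e ≠ Sum.inl ((⟨p', rfl⟩ : {q // γ q = γ p'}), r')
        simp
      · rintro (i'' | t') ⟨wa, wb, hadj, ha, hb⟩
        · rcases wb with ⟨⟨pp, hpp⟩, rr⟩ | ee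
          · simp only [Sum.elim_inl, Sum.inl.injEq, Prod.mk.injEq] at hb
            rw [← hpp, hb.1]
          · exact absurd hb (by simp)
        · exact absurd ha (by simp)
    · -- infinity-infinity
      exfalso
      apply huv
      have h1 := e.isLt
      have h2 := e'.isLt
      have : e = e' := Fin.ext (by omega)
      rw [this]

end Theta14
namespace Theta14

variable {V0 : Type*} {G : SimpleGraph V0}

def octaTB : Fin 4 → Fin 3 → Fin 3 × Fin 2 :=
  ![![(0,0),(1,0),(2,0)], ![(0,0),(1,1),(2,1)], ![(0,1),(1,0),(2,1)], ![(0,1),(1,1),(2,0)]]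

def gddTB : Fin 15 → Fin 4 → Fin 5 × Fin 3 :=
  ![![(1, 0), (2, 0), (3, 2), (4, 1)],
    ![(1, 1), (2, 1), (3, 0), (4, 2)],
    ![(1, 2), (2, 2), (3, 1), (4, 0)],
    ![(0, 0), (2, 0), (3, 0), (4, 0)],
    ![(0, 1), (2, 1), (3, 1), (4, 1)],
    ![(0, 2), (2, 2), (3, 2), (4, 2)],
    ![(0, 0), (1, 0), (3, 1), (4, 2)],
    ![(0, 1), (1, 1), (3, 2), (4, 0)],
    ![(0, 2), (1, 2), (3, 0), (4, 1)],
    ![(0, 2), (1, 0), (2, 1), (4, 0)],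
    ![(0, 0), (1, 1), (2, 2), (4, 1)],
    ![(0, 1), (1, 2), (2, 0), (4, 2)],
    ![(0, 1), (1, 0), (2, 2), (3, 0)],
    ![(0, 2), (1, 1), (2, 0), (3, 1)],
    ![(0, 0), (1, 2), (2, 1), (3, 2)]]

/-- K_{28,28,28} (+ point) filled: designs of order 84 and 85. -/
lemma design_84 (m1 : (completeMultipartite ![14, 14, 14]).DecomposesInto G)
    (ε : ℕ) (hε : ε ≤ 1) (h28 : G.HasDesign (28 + ε)) : G.HasDesign (84 + ε) := by
  have h14 : ![(14:ℕ), 14, 14] = (fun _ : Fin 3 => 14) := by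
    funext i; fin_cases i <;> rfl
  rw [h14] at m1
  have := uniform_gdd (G := G) 3 14 m1 (Fin 3 × Fin 2) 3 Prod.fst 4 octaTB
    (by decide) (by decide) ε hε ?_
  · have hc : Fintype.card (Fin 3 × Fin 2) = 6 := by simp
    rw [hc] at this
    convert this using 2
  · intro i
    have hc : Fintype.card {p : Fin 3 × Fin 2 // p.1 = i} = 2 := by
      fin_cases i <;> decide
    rw [hc]
    convert h28 using 2

set_option maxHeartbeats 4000000 in
lemma design_105 (m2 : (completeMultipartite ![7, 7, 7, 7]).DecomposesInto G)
    (h21 : G.HasDesign 21) : G.HasDesign 105 := by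
  have h7 : ![(7:ℕ), 7, 7, 7] = (fun _ : Fin 4 => 7) := by
    funext i; fin_cases i <;> rfl
  rw [h7] at m2
  have := uniform_gdd (G := G) 4 7 m2 (Fin 5 × Fin 3) 5 Prod.fst 15 gddTB
    (by decide) (by decide) 0 (by omega) ?_
  · have hc : Fintype.card (Fin 5 × Fin 3) = 15 := by simp
    rw [hc] at this
    convert this using 2
  · intro i
    have hc : Fintype.card {p : Fin 5 × Fin 3 // p.1 = i} = 3 := by
      fin_cases i <;> decide
    rw [hc]
    convert h21 using 2

/-- Filling K_{28,28,28,35} plus a point: a design of order 120. -/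
lemma design_120 (m3 : (completeMultipartite ![28, 28, 28, 35]).DecomposesInto G)
    (h29 : G.HasDesign 29) (h36 : G.HasDesign 36) : G.HasDesign 120 := by
  classical
  have hcard : Fintype.card (((i : Fin 4) × Fin (![28,28,28,35] i)) ⊕ Fin 1) = 120 := by
    simp only [Fintype.card_sum, Fintype.card_sigma, Fintype.card_fin]
    decide
  apply hasDesign_of_decomp hcard
  refine top_decomposesInto_of_cover
    (J := Unit ⊕ Fin 4)
    (P := fun j => match j with
      | .inl _ => (i : Fin 4) × Fin (![28,28,28,35] i)
      | .inr i => Fin (![28,28,28,35] i) ⊕ Fin 1)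
    (L := fun j => match j with
      | .inl _ => completeMultipartite ![28,28,28,35]
      | .inr _ => ⊤)
    (φ := fun j => match j with
      | .inl _ => fun v => Sum.inl v
      | .inr i => Sum.elim (fun t => Sum.inl ⟨i, t⟩) (fun e => Sum.inr e))
    ?_ ?_ ?_
  · rintro (u | i)
    · exact fun a b h => by simpa using h
    · rintro (t | e) (t' | e') h <;>
        simp only [Sum.elim_inl, Sum.elim_inr, Sum.inl.injEq, Sum.inr.injEq] at h
      · rw [(Sigma.mk.inj_iff.mp h).2.eq]
      · exact absurd h (by simp)
      · exact absurd h (by simp)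
      · rw [h]
  · rintro (u | i)
    · exact m3
    · fin_cases i
      · exact decomp_of_hasDesign (by simp; rfl) h29
      · exact decomp_of_hasDesign (by simp; rfl) h29
      · exact decomp_of_hasDesign (by simp; rfl) h29
      · exact decomp_of_hasDesign (by simp; rfl) h36
  · rintro (⟨i, t⟩ | e) (⟨i', t'⟩ | e') huv
    · by_cases hii : i = i'
      · subst hii
        refine ⟨Sum.inr i, ⟨Sum.inl t, Sum.inl t', ?_, rfl, rfl⟩, ?_⟩
        · show Sum.inl t ≠ Sum.inl t'
          intro h
          apply huv
          simp only [Sum.inl.injEq] at h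
          rw [h]
        · rintro (u'' | i'') ⟨wa, wb, hadj, ha, hb⟩
          · simp only [Sum.inl.injEq] at ha hb
            exfalso
            apply hadj
            rw [ha, hb]
          · rcases wa with t'' | e''
            · simp only [Sum.elim_inl, Sum.inl.injEq] at ha
              rw [(Sigma.mk.inj_iff.mp ha).1]
            · exact absurd ha (by simp)
      · refine ⟨Sum.inl (), ⟨⟨i, t⟩, ⟨i', t'⟩, hii, rfl, rfl⟩, ?_⟩
        rintro (u'' | i'') ⟨wa, wb, hadj, ha, hb⟩
        · rfl
        · rcases wa with t'' | e'' <;> rcases wb with t3 | e3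
          · simp only [Sum.elim_inl, Sum.inl.injEq] at ha hb
            exact absurd ((Sigma.mk.inj_iff.mp ha).1.symm.trans (Sigma.mk.inj_iff.mp hb).1) hii
          · exact absurd hb (by simp)
          · exact absurd ha (by simp)
          · exact absurd ha (by simp)
    · refine ⟨Sum.inr i, ⟨Sum.inl t, Sum.inr e', ?_, rfl, rfl⟩, ?_⟩
      · show Sum.inl t ≠ Sum.inr e'
        simp
      · rintro (u'' | i'') ⟨wa, wb, hadj, ha, hb⟩
        · exact absurd hb (by simp)
        · rcases wa with t'' | e''
          · simp only [Sum.elim_inl, Sum.inl.injEq] at ha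
            rw [(Sigma.mk.inj_iff.mp ha).1]
          · exact absurd ha (by simp)
    · refine ⟨Sum.inr i', ⟨Sum.inr e, Sum.inl t', ?_, rfl, rfl⟩, ?_⟩
      · show Sum.inr e ≠ Sum.inl t'
        simp
      · rintro (u'' | i'') ⟨wa, wb, hadj, ha, hb⟩
        · exact absurd ha (by simp)
        · rcases wb with t'' | e''
          · simp only [Sum.elim_inl, Sum.inl.injEq] at hb
            rw [(Sigma.mk.inj_iff.mp hb).1]
          · exact absurd hb (by simp)
    · exfalso
      apply huv
      rw [Subsingleton.elim e e']

end Theta14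
namespace Theta14

lemma pow4_eq (i : ℕ) : (4:ℕ)^i = 2^(2*i) := by
  rw [show (4:ℕ) = 2^2 from rfl, ← pow_mul]

lemma tdgood_two_pow (j : ℕ) (hj : 2 ≤ j) : TDgood (2^j) := by
  rcases Nat.even_or_odd j with ⟨r, hr⟩ | ⟨r, hr⟩
  · -- j = 2r
    have hr2 : 1 ≤ r := by omega
    have : (2:ℕ)^j = 4 * 4^(r-1) := by
      rw [pow4_eq, show 4 = 2^2 from rfl, ← pow_add]
      congr 1
      omega
    rw [this]
    exact tdgood_mul4pow tdgood_4 _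
  · -- j = 2r+1
    have hr2 : 1 ≤ r := by omega
    have : (2:ℕ)^j = 8 * 4^(r-1) := by
      rw [pow4_eq, show 8 = 2^3 from rfl, ← pow_add]
      congr 1
      omega
    rw [this]
    exact tdgood_mul4pow tdgood_8 _

lemma tdgood_5four (i : ℕ) : TDgood (5 * 4^i) := tdgood_mul4pow tdgood_5 i
lemma tdgood_9four (i : ℕ) : TDgood (9 * 4^i) := tdgood_mul4pow tdgood_9 i

lemma param (s ε : ℕ) (hs : 16 ≤ s) (hε : ε ≤ 1)
    (hres : (ε = 0 ∧ (s % 4 = 0 ∨ s % 4 = 3)) ∨ (ε = 1 ∧ (s % 4 = 0 ∨ s % 4 = 1)))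
    (h17 : ¬(s = 17 ∧ ε = 1)) :
    ∃ m y, TDgood m ∧ s = 4*m + y ∧ y ≤ 4*m ∧ y % 4 ≠ 2 ∧ 4 ≤ m ∧
      (ε = 0 → m % 4 = 0 ∧ (y % 4 = 0 ∨ y % 4 = 3)) ∧
      (ε = 1 → (m % 4 = 0 ∨ m % 4 = 1) ∧ (y % 4 = 0 ∨ y % 4 = 1) ∧ y ≠ 1) := by
  set k := Nat.log 2 s with hk
  have hs0 : s ≠ 0 := by omega
  have hk1 : 2^k ≤ s := Nat.pow_log_le_self 2 hs0
  have hk2 : s < 2^(k+1) := Nat.lt_pow_succ_log_self (by norm_num) s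
  have hk4 : 4 ≤ k := by
    rw [hk]
    rw [Nat.le_log_iff_pow_le (by norm_num) hs0]
    omega
  by_cases hspec : s = 2^k + 1 ∧ ε = 1
  · -- the special case s = 2^k + 1
    obtain ⟨hse, hε1⟩ := hspec
    have hk5 : 5 ≤ k := by
      rcases Nat.lt_or_ge k 5 with h | h
      · have hk44 : k = 4 := by omega
        rw [hk44] at hse
        norm_num at hse
        exact absurd ⟨hse, hε1⟩ h17
      · exact h
    rcases Nat.even_or_odd k with ⟨r, hr⟩ | ⟨r, hr⟩
    · -- k even, k ≥ 6 : m = 9 * 4^((k-6)/2)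
      have hr3 : 3 ≤ r := by omega
      refine ⟨9 * 4^(r-3), 2^k + 1 - 4 * (9 * 4^(r-3)), tdgood_9four _, ?_⟩
      have h4m : 4 * (9 * 4^(r-3)) = 9 * 2^(k-4) := by
        rw [pow4_eq, show 4 * (9 * 2^(2*(r-3))) = 9 * (2^2 * 2^(2*(r-3))) from by ring,
          ← pow_add]
        congr 2
        omega
      have hpow : 2^k = 16 * 2^(k-4) := by
        rw [show (16:ℕ) = 2^4 from rfl, ← pow_add]
        congr 1
        omega
      have hp4 : 4 ∣ 2^(k-4) := by
        have : (2:ℕ)^(k-4) = 4 * 2^(k-6) := by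
          rw [show (4:ℕ) = 2^2 from rfl, ← pow_add]
          congr 1
          omega
        omega
      have hm4 : (4:ℕ) ≤ 9 * 4^(r-3) := by
        have : 1 ≤ (4:ℕ)^(r-3) := Nat.one_le_pow _ _ (by norm_num)
        omega
      obtain ⟨w, hw⟩ := hp4
      have hm4pow : (4:ℕ)^(r-3) = 1 ∨ ∃ v, (4:ℕ)^(r-3) = 4*v := by
        rcases Nat.eq_or_lt_of_le hr3 with h | h
        · left; rw [← h]; simp
        · right
          exact ⟨4^(r-4), by rw [← pow_succ']; congr 1; omega⟩
      constructor
      · omega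
      refine ⟨by omega, by omega, by omega, ?_, ?_⟩
      · intro h0; omega
      · intro _
        rcases hm4pow with h | ⟨v, hv⟩ <;>
          refine ⟨by omega, by omega, by omega⟩
    · -- k odd, k ≥ 5 : m = 5 * 4^((k-5)/2)
      have hr2 : 2 ≤ r := by omega
      refine ⟨5 * 4^(r-2), 2^k + 1 - 4 * (5 * 4^(r-2)), tdgood_5four _, ?_⟩
      have h4m : 4 * (5 * 4^(r-2)) = 5 * 2^(k-3) := by
        rw [pow4_eq, show 4 * (5 * 2^(2*(r-2))) = 5 * (2^2 * 2^(2*(r-2))) from by ring,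
          ← pow_add]
        congr 2
        omega
      have hpow : 2^k = 8 * 2^(k-3) := by
        rw [show (8:ℕ) = 2^3 from rfl, ← pow_add]
        congr 1
        omega
      have hp4 : 4 ∣ 2^(k-3) := by
        have : (2:ℕ)^(k-3) = 4 * 2^(k-5) := by
          rw [show (4:ℕ) = 2^2 from rfl, ← pow_add]
          congr 1
          omega
        omega
      have hm4 : (4:ℕ) ≤ 5 * 4^(r-2) := by
        have : 1 ≤ (4:ℕ)^(r-2) := Nat.one_le_pow _ _ (by norm_num)
        omega
      obtain ⟨w, hw⟩ := hp4
      have hm4pow : (4:ℕ)^(r-2) = 1 ∨ ∃ v, (4:ℕ)^(r-2) = 4*v := by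
        rcases Nat.eq_or_lt_of_le hr2 with h | h
        · left; rw [← h]; simp
        · right
          exact ⟨4^(r-3), by rw [← pow_succ']; congr 1; omega⟩
      constructor
      · omega
      refine ⟨by omega, by omega, by omega, ?_, ?_⟩
      · intro h0; omega
      · intro _
        rcases hm4pow with h | ⟨v, hv⟩ <;>
          refine ⟨by omega, by omega, by omega⟩
  · -- generic case : m = 2^(k-2)
    refine ⟨2^(k-2), s - 2^k, tdgood_two_pow _ (by omega), ?_⟩
    have h4m : 4 * 2^(k-2) = 2^k := by
      rw [show (4:ℕ) = 2^2 from rfl, ← pow_add]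
      congr 1
      omega
    have hp4 : 4 ∣ 2^(k-2) := by
      have : (2:ℕ)^(k-2) = 4 * 2^(k-4) := by
        rw [show (4:ℕ) = 2^2 from rfl, ← pow_add]
        congr 1
        omega
      omega
    have hm4 : (4:ℕ) ≤ 2^(k-2) := by
      have : (2:ℕ)^2 ≤ 2^(k-2) := Nat.pow_le_pow_right (by norm_num) (by omega)
      omega
    obtain ⟨w, hw⟩ := hp4
    have hy1 : ¬(s - 2^k = 1 ∧ ε = 1) := by
      intro ⟨hy, hε1⟩
      exact hspec ⟨by omega, hε1⟩
    refine ⟨by omega, by omega, by omega, by omega, ?_, ?_⟩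
    · intro h0
      rcases hres with ⟨-, hr⟩ | ⟨h1, -⟩
      · constructor <;> omega
      · omega
    · intro h1
      rcases hres with ⟨h0, -⟩ | ⟨-, hr⟩
      · omega
      · refine ⟨by omega, by omega, by omega⟩

end Theta14
theorem theta14_master_construction {V : Type*} (G : SimpleGraph V)
    (h1 : G.HasDesign 21)
    (h2 : G.HasDesign 28)
    (h3 : G.HasDesign 29)
    (h4 : G.HasDesign 36)
    (h5 : G.HasDesign 49)
    (h6 : G.HasDesign 56)
    (h7 : G.HasDesign 57)
    (h8 : G.HasDesign 64)
    (h9 : G.HasDesign 77)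
    (h10 : G.HasDesign 92)
    (m1 : (completeMultipartite ![14, 14, 14]).DecomposesInto G)
    (m2 : (completeMultipartite ![7, 7, 7, 7]).DecomposesInto G)
    (m3 : (completeMultipartite ![28, 28, 28, 35]).DecomposesInto G)
    (m4 : (completeMultipartite ![7, 7, 7, 7, 7]).DecomposesInto G)
    (m5 : (completeMultipartite ![7, 7, 7, 7, 21]).DecomposesInto G)
    (m6 : (completeMultipartite ![7, 7, 7, 7, 28]).DecomposesInto G)
    (n : ℕ) (hn : n % 28 = 0 ∨ n % 28 = 1 ∨ n % 28 = 8 ∨ n % 28 = 21) (hne1 : n ≠ 8) :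
    G.HasDesign n := by
  have main : ∀ N : ℕ, (N % 28 = 0 ∨ N % 28 = 1 ∨ N % 28 = 8 ∨ N % 28 = 21) → N ≠ 8 →
      G.HasDesign N := by
    intro N
    induction N using Nat.strong_induction_on with
    | _ N IH =>
      intro hN hne
      have hsplit : N = 0 ∨ N = 1 ∨ N = 21 ∨ N = 28 ∨ N = 29 ∨ N = 36 ∨ N = 49 ∨ N = 56 ∨
          N = 57 ∨ N = 64 ∨ N = 77 ∨ N = 84 ∨ N = 85 ∨ N = 92 ∨ N = 105 ∨ N = 120 ∨
          (112 ≤ N ∧ N ≠ 120) := by omega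
      rcases hsplit with rfl|rfl|rfl|rfl|rfl|rfl|rfl|rfl|rfl|rfl|rfl|rfl|rfl|rfl|rfl|rfl|⟨hN1, hN2⟩
      · exact Theta14.hasDesign_zero
      · exact Theta14.hasDesign_one
      · exact h1
      · exact h2
      · exact h3
      · exact h4
      · exact h5
      · exact h6
      · exact h7
      · exact h8
      · exact h9
      · exact Theta14.design_84 m1 0 (by omega) h2
      · exact Theta14.design_84 m1 1 (by omega) h3
      · exact h10
      · exact Theta14.design_105 m2 h1
      · exact Theta14.design_120 m3 h3 h4
      · -- the general case
        have hεor : N % 7 = 0 ∨ N % 7 = 1 := by omega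
        obtain ⟨m, y, hTD, hsum, hy, hr, hm4, hE0, hE1⟩ :=
          Theta14.param (N / 7) (N % 7) (by omega) (by omega) (by omega) (by omega)
        have hmod : (m % 4 = 0 ∨ m % 4 = 1) ∧ (y % 4 = 0 ∨ y % 4 = 1 ∨ y % 4 = 3) ∧
            (N % 7 = 1 → y ≠ 1) ∧ (N % 7 = 0 → m % 4 = 0 ∧ (y % 4 = 0 ∨ y % 4 = 3)) ∧
            (N % 7 = 1 → y % 4 = 0 ∨ y % 4 = 1) := by
          rcases hεor with hc | hc
          · obtain ⟨hm0, hy0⟩ := hE0 hc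
            refine ⟨Or.inl hm0, by omega, by omega, fun _ => ⟨hm0, hy0⟩, by omega⟩
          · obtain ⟨hm01, hy01, hy1⟩ := hE1 hc
            refine ⟨hm01, by omega, fun _ => hy1, by omega, fun _ => hy01⟩
        obtain ⟨hmm, hyy, hy1, hc0, hc1⟩ := hmod
        have hdm : G.HasDesign (7 * m + N % 7) := by
          refine IH _ (by omega) ?_ (by omega)
          rcases hεor with hc | hc <;> rcases hmm with hm' | hm'
          · left; omega
          · left; omega
          · right; left; omega
          · right; right; left; omega
        have hdy : G.HasDesign (7 * y + N % 7) := by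
          refine IH _ (by omega) ?_ ?_
          · rcases hεor with hc | hc
            · obtain ⟨-, hy0⟩ := hc0 hc
              rcases hy0 with hy' | hy'
              · left; omega
              · right; right; right; omega
            · rcases hc1 hc with hy' | hy'
              · right; left; omega
              · right; right; left; omega
          · rcases hεor with hc | hc
            · omega
            · have := hy1 hc
              omega
        have hstep := Theta14.design_step m2 m4 m5 m6 m y (N % 7) hTD hy hr (by omega) hdm hdy
        rwa [show 28 * m + 7 * y + N % 7 = N from by omega] at hstep
  exact main n hn hne1
end

section
/- For every theta graph Θ(a,b,c) with a+b+c = 11 (so 1 ≤ a ≤ b ≤ c and b ≥ 2) there exist Θ(a,b,c) designs of orders 11 and 12; moreover, if a, b, c are not all odd, there also exists a Θ(a,b,c) design of order 22. -/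
open SimpleGraph

set_option maxRecDepth 40000
set_option maxHeartbeats 4000000


instance consecEdges.decMem (l : List ℕ) (e : Sym2 ℕ) : Decidable (e ∈ consecEdges l) :=
  inferInstanceAs (Decidable (∃ p ∈ l.zip l.tail, e = s(p.1, p.2)))

instance thetaAdj.dec (a b c : ℕ) : DecidableRel (thetaGraph a b c).Adj := fun v w =>
  decidable_of_iff
    ((s((v : ℕ), (w : ℕ)) ∈ consecEdges (thetaPath a 2) ∨
      s((v : ℕ), (w : ℕ)) ∈ consecEdges (thetaPath b (a + 1)) ∨
      s((v : ℕ), (w : ℕ)) ∈ consecEdges (thetaPath c (a + b))) ∧ (v : ℕ) ≠ (w : ℕ))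
    (by
      rw [thetaGraph]
      simp only [SimpleGraph.comap_adj, SimpleGraph.fromEdgeSet_adj, Set.mem_union, or_assoc])

instance existsUnique.dec {α : Type*} [Fintype α] [DecidableEq α] (p : α → Prop)
    [DecidablePred p] : Decidable (∃! x, p x) :=
  inferInstanceAs (Decidable (∃ x, p x ∧ ∀ y, p y → y = x))

def blockSub {m n : ℕ} (G : SimpleGraph (Fin m)) (g : Fin m → Fin n)
    (hg : Function.Injective g) : (⊤ : SimpleGraph (Fin n)).Subgraph where
  verts := Set.range g
  Adj x y := ∃ u v, G.Adj u v ∧ g u = x ∧ g v = y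
  adj_sub := by rintro x y ⟨u, v, h, rfl, rfl⟩; simpa using fun hc => G.ne_of_adj h (hg hc)
  edge_vert := by rintro x y ⟨u, v, h, rfl, rfl⟩; exact ⟨u, rfl⟩
  symm := ⟨by rintro x y ⟨u, v, h, rfl, rfl⟩; exact ⟨v, u, h.symm, rfl, rfl⟩⟩

noncomputable def blockIso {m n : ℕ} (G : SimpleGraph (Fin m)) (g : Fin m → Fin n)
    (hg : Function.Injective g) : G ≃g (blockSub G g hg).coe where
  toEquiv := Equiv.ofInjective g hg
  map_rel_iff' := by
    intro u v
    constructor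
    · rintro ⟨u', v', h, hu, hv⟩
      rwa [hg hu, hg hv] at h
    · intro h; exact ⟨u, v, h, rfl, rfl⟩

lemma decomp_of_lists {m n : ℕ} (G : SimpleGraph (Fin m))
    (E : List (Fin m × Fin m))
    (hE : ∀ u v, G.Adj u v ↔ ((u, v) ∈ E ∨ (v, u) ∈ E))
    (L : List (Fin m → Fin n))
    (hinj : ∀ i : Fin L.length, ∀ x y, L.get i x = L.get i y → x = y)
    (hcov : ∀ x y : Fin n, x < y →
      ∃! i : Fin L.length, ∃ p ∈ E,
        (L.get i p.1 = x ∧ L.get i p.2 = y) ∨ (L.get i p.1 = y ∧ L.get i p.2 = x)) :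
    (⊤ : SimpleGraph (Fin n)).DecomposesInto G := by
  have hinj' : ∀ i : Fin L.length, Function.Injective (L.get i) := fun i x y h => hinj i x y h
  refine ⟨Fin L.length, fun i => blockSub G (L.get i) (hinj' i), fun i => ⟨blockIso ..⟩, ?_⟩
  intro e
  induction e with
  | _ x y =>
    intro he
    rw [mem_edgeSet, top_adj] at he
    have key : ∀ i : Fin L.length, (s(x, y) ∈ (blockSub G (L.get i) (hinj' i)).edgeSet ↔
        ∃ p ∈ E, (L.get i p.1 = x ∧ L.get i p.2 = y) ∨ (L.get i p.1 = y ∧ L.get i p.2 = x)) := by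
      intro i
      rw [Subgraph.mem_edgeSet]
      constructor
      · rintro ⟨u, v, h, rfl, rfl⟩
        rcases (hE u v).1 h with h' | h'
        · exact ⟨(u, v), h', Or.inl ⟨rfl, rfl⟩⟩
        · exact ⟨(v, u), h', Or.inr ⟨rfl, rfl⟩⟩
      · rintro ⟨⟨u, v⟩, hp, ⟨rfl, rfl⟩ | ⟨rfl, rfl⟩⟩
        · exact ⟨u, v, (hE u v).2 (Or.inl hp), rfl, rfl⟩
        · exact ⟨v, u, ((hE u v).2 (Or.inl hp)).symm, rfl, rfl⟩
    rcases lt_or_gt_of_ne he with hlt | hlt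
    · obtain ⟨i, hi, hu⟩ := hcov x y hlt
      exact ⟨i, (key i).2 hi, fun j hj => hu j ((key j).1 hj)⟩
    · obtain ⟨i, hi, hu⟩ := hcov y x hlt
      have hs : ∀ j : Fin L.length,
          ((∃ p ∈ E, (L.get j p.1 = x ∧ L.get j p.2 = y) ∨ (L.get j p.1 = y ∧ L.get j p.2 = x)) ↔
           (∃ p ∈ E, (L.get j p.1 = y ∧ L.get j p.2 = x) ∨ (L.get j p.1 = x ∧ L.get j p.2 = y))) := by
        intro j
        constructor <;> (rintro ⟨p, hp, h | h⟩; exacts [⟨p, hp, Or.inr h⟩, ⟨p, hp, Or.inl h⟩])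
      exact ⟨i, (key i).2 ((hs i).2 hi), fun j hj => hu j ((hs j).1 ((key j).1 hj))⟩

lemma d_128_11 : (⊤ : SimpleGraph (Fin 11)).DecomposesInto (thetaGraph 1 2 8) :=
  decomp_of_lists (thetaGraph 1 2 8)
    ([(0,1), (0,2), (2,1), (0,3), (3,4), (4,5), (5,6), (6,7), (7,8), (8,9), (9,1)] : List (Fin (1+2+8-1) × Fin (1+2+8-1)))
    (by decide)
    ([![0,5,6,8,10,2,3,7,1,9],
     ![2,4,9,0,7,8,6,3,5,10],
     ![1,0,3,10,7,2,6,4,8,9],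
     ![1,4,5,8,3,9,7,6,10,0],
     ![5,2,8,7,4,3,10,9,6,1]] : List (Fin (1+2+8-1) → Fin 11))
    (by decide) (by decide)


lemma d_128_12 : (⊤ : SimpleGraph (Fin 12)).DecomposesInto (thetaGraph 1 2 8) :=
  decomp_of_lists (thetaGraph 1 2 8)
    ([(0,1), (0,2), (2,1), (0,3), (3,4), (4,5), (5,6), (6,7), (7,8), (8,9), (9,1)] : List (Fin (1+2+8-1) × Fin (1+2+8-1)))
    (by decide)
    ([![10,8,9,3,0,5,7,6,11,1],
     ![0,2,8,11,10,6,3,9,4,5],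
     ![6,5,8,4,1,10,7,2,9,11],
     ![9,1,0,6,2,4,11,8,3,7],
     ![3,11,2,4,10,5,1,6,0,7],
     ![7,4,8,9,5,3,1,2,10,0]] : List (Fin (1+2+8-1) → Fin 12))
    (by decide) (by decide)


lemma d_128_22 : (⊤ : SimpleGraph (Fin 22)).DecomposesInto (thetaGraph 1 2 8) :=
  decomp_of_lists (thetaGraph 1 2 8)
    ([(0,1), (0,2), (2,1), (0,3), (3,4), (4,5), (5,6), (6,7), (7,8), (8,9), (9,1)] : List (Fin (1+2+8-1) × Fin (1+2+8-1)))
    (by decide)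
    ([![21,10,14,4,8,7,0,13,11,19],
     ![19,17,3,7,2,6,4,5,15,18],
     ![18,6,8,0,10,16,9,12,4,19],
     ![21,11,15,5,9,8,1,7,12,20],
     ![20,18,4,8,3,0,5,6,16,19],
     ![19,0,9,1,11,17,10,13,5,20],
     ![21,12,16,6,10,9,2,8,13,14],
     ![14,19,5,9,4,1,6,0,17,20],
     ![20,1,10,2,12,18,11,7,6,14],
     ![21,13,17,0,11,10,3,9,7,15],
     ![15,20,6,10,5,2,0,1,18,14],
     ![14,2,11,3,13,19,12,8,0,15],
     ![21,7,18,1,12,11,4,10,8,16],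
     ![16,14,0,11,6,3,1,2,19,15],
     ![15,3,12,4,7,20,13,9,1,16],
     ![21,8,19,2,13,12,5,11,9,17],
     ![17,15,1,12,0,4,2,3,20,16],
     ![16,4,13,5,8,14,7,10,2,17],
     ![21,9,20,3,7,13,6,12,10,18],
     ![18,16,2,13,1,5,3,4,14,17],
     ![17,5,7,6,9,15,8,11,3,18]] : List (Fin (1+2+8-1) → Fin 22))
    (by decide) (by decide)


lemma d_137_11 : (⊤ : SimpleGraph (Fin 11)).DecomposesInto (thetaGraph 1 3 7) :=
  decomp_of_lists (thetaGraph 1 3 7)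
    ([(0,1), (0,2), (2,3), (3,1), (0,4), (4,5), (5,6), (6,7), (7,8), (8,9), (9,1)] : List (Fin (1+3+7-1) × Fin (1+3+7-1)))
    (by decide)
    ([![7,3,2,6,8,5,4,1,10,0],
     ![2,3,0,1,5,6,4,10,8,9],
     ![9,0,1,5,10,7,6,8,3,4],
     ![0,7,8,1,6,9,5,10,2,4],
     ![9,2,4,8,7,5,3,10,6,1]] : List (Fin (1+3+7-1) → Fin 11))
    (by decide) (by decide)


lemma d_137_12 : (⊤ : SimpleGraph (Fin 12)).DecomposesInto (thetaGraph 1 3 7) :=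
  decomp_of_lists (thetaGraph 1 3 7)
    ([(0,1), (0,2), (2,3), (3,1), (0,4), (4,5), (5,6), (6,7), (7,8), (8,9), (9,1)] : List (Fin (1+3+7-1) × Fin (1+3+7-1)))
    (by decide)
    ([![7,4,8,3,2,6,9,11,0,10],
     ![10,9,2,1,5,3,7,11,4,0],
     ![6,8,0,5,1,10,7,9,4,2],
     ![1,5,11,6,0,2,3,10,8,4],
     ![11,2,3,9,8,1,4,6,7,5],
     ![3,0,1,7,6,10,11,5,9,8]] : List (Fin (1+3+7-1) → Fin 12))
    (by decide) (by decide)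


lemma d_146_11 : (⊤ : SimpleGraph (Fin 11)).DecomposesInto (thetaGraph 1 4 6) :=
  decomp_of_lists (thetaGraph 1 4 6)
    ([(0,1), (0,2), (2,3), (3,4), (4,1), (0,5), (5,6), (6,7), (7,8), (8,9), (9,1)] : List (Fin (1+4+6-1) × Fin (1+4+6-1)))
    (by decide)
    ([![3,7,2,6,5,9,1,8,10,4],
     ![3,0,8,5,4,1,6,10,2,9],
     ![1,2,5,9,4,0,10,7,6,8],
     ![2,0,7,9,6,5,10,3,4,8],
     ![1,7,10,9,8,4,6,3,5,0]] : List (Fin (1+4+6-1) → Fin 11))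
    (by decide) (by decide)


lemma d_146_12 : (⊤ : SimpleGraph (Fin 12)).DecomposesInto (thetaGraph 1 4 6) :=
  decomp_of_lists (thetaGraph 1 4 6)
    ([(0,1), (0,2), (2,3), (3,4), (4,1), (0,5), (5,6), (6,7), (7,8), (8,9), (9,1)] : List (Fin (1+4+6-1) × Fin (1+4+6-1)))
    (by decide)
    ([![0,3,7,9,1,5,2,8,6,11],
     ![6,4,0,9,10,1,2,3,8,11],
     ![9,2,5,7,11,8,4,0,1,10],
     ![7,1,8,10,5,4,3,6,9,11],
     ![11,10,0,2,6,5,4,9,3,7],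
     ![8,5,0,10,3,1,4,2,7,6]] : List (Fin (1+4+6-1) → Fin 12))
    (by decide) (by decide)


lemma d_146_22 : (⊤ : SimpleGraph (Fin 22)).DecomposesInto (thetaGraph 1 4 6) :=
  decomp_of_lists (thetaGraph 1 4 6)
    ([(0,1), (0,2), (2,3), (3,4), (4,1), (0,5), (5,6), (6,7), (7,8), (8,9), (9,1)] : List (Fin (1+4+6-1) × Fin (1+4+6-1)))
    (by decide)
    ([![21,10,14,11,0,2,1,9,12,5],
     ![19,17,13,12,16,4,2,18,10,8],
     ![18,4,6,8,15,14,9,3,0,17],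
     ![21,11,15,12,1,3,2,10,13,6],
     ![20,18,7,13,17,5,3,19,11,9],
     ![19,5,0,9,16,15,10,4,1,18],
     ![21,12,16,13,2,4,3,11,7,0],
     ![14,19,8,7,18,6,4,20,12,10],
     ![20,6,1,10,17,16,11,5,2,19],
     ![21,13,17,7,3,5,4,12,8,1],
     ![15,20,9,8,19,0,5,14,13,11],
     ![14,0,2,11,18,17,12,6,3,20],
     ![21,7,18,8,4,6,5,13,9,2],
     ![16,14,10,9,20,1,6,15,7,12],
     ![15,1,3,12,19,18,13,0,4,14],
     ![21,8,19,9,5,0,6,7,10,3],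
     ![17,15,11,10,14,2,0,16,8,13],
     ![16,2,4,13,20,19,7,1,5,15],
     ![21,9,20,10,6,1,0,8,11,4],
     ![18,16,12,11,15,3,1,17,9,7],
     ![17,3,5,7,14,20,8,2,6,16]] : List (Fin (1+4+6-1) → Fin 22))
    (by decide) (by decide)


lemma d_155_11 : (⊤ : SimpleGraph (Fin 11)).DecomposesInto (thetaGraph 1 5 5) :=
  decomp_of_lists (thetaGraph 1 5 5)
    ([(0,1), (0,2), (2,3), (3,4), (4,5), (5,1), (0,6), (6,7), (7,8), (8,9), (9,1)] : List (Fin (1+5+5-1) × Fin (1+5+5-1)))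
    (by decide)
    ([![3,10,7,6,0,4,8,1,5,2],
     ![10,9,5,8,6,4,7,0,2,1],
     ![5,4,3,9,0,8,7,2,6,1],
     ![4,3,2,8,9,6,7,1,10,0],
     ![9,5,7,8,10,6,2,3,1,0]] : List (Fin (1+5+5-1) → Fin 11))
    (by decide) (by decide)


lemma d_155_12 : (⊤ : SimpleGraph (Fin 12)).DecomposesInto (thetaGraph 1 5 5) :=
  decomp_of_lists (thetaGraph 1 5 5)
    ([(0,1), (0,2), (2,3), (3,4), (4,5), (5,1), (0,6), (6,7), (7,8), (8,9), (9,1)] : List (Fin (1+5+5-1) × Fin (1+5+5-1)))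
    (by decide)
    ([![11,10,9,2,6,5,0,8,3,4],
     ![6,0,10,7,8,2,11,3,9,1],
     ![8,9,1,5,4,0,10,3,2,7],
     ![7,3,6,9,5,0,4,11,2,1],
     ![2,5,10,1,6,3,4,8,11,7],
     ![1,4,11,5,8,6,7,0,10,9]] : List (Fin (1+5+5-1) → Fin 12))
    (by decide) (by decide)


lemma d_227_11 : (⊤ : SimpleGraph (Fin 11)).DecomposesInto (thetaGraph 2 2 7) :=
  decomp_of_lists (thetaGraph 2 2 7)
    ([(0,2), (2,1), (0,3), (3,1), (0,4), (4,5), (5,6), (6,7), (7,8), (8,9), (9,1)] : List (Fin (2+2+7-1) × Fin (2+2+7-1)))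
    (by decide)
    ([![2,9,5,0,1,6,4,8,3,7],
     ![2,5,7,6,3,0,1,4,10,8],
     ![4,10,7,9,5,0,8,6,3,1],
     ![5,9,1,3,10,0,6,7,8,2],
     ![4,10,2,3,0,7,1,8,9,6]] : List (Fin (2+2+7-1) → Fin 11))
    (by decide) (by decide)


lemma d_227_12 : (⊤ : SimpleGraph (Fin 12)).DecomposesInto (thetaGraph 2 2 7) :=
  decomp_of_lists (thetaGraph 2 2 7)
    ([(0,2), (2,1), (0,3), (3,1), (0,4), (4,5), (5,6), (6,7), (7,8), (8,9), (9,1)] : List (Fin (2+2+7-1) × Fin (2+2+7-1)))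
    (by decide)
    ([![10,0,3,11,8,1,5,7,6,9],
     ![2,4,11,9,3,7,1,0,5,6],
     ![11,8,5,7,9,1,2,4,10,6],
     ![1,6,3,11,10,7,0,4,8,2],
     ![7,5,2,4,9,3,11,8,0,10],
     ![9,3,5,8,10,2,0,6,1,4]] : List (Fin (2+2+7-1) → Fin 12))
    (by decide) (by decide)


lemma d_227_22 : (⊤ : SimpleGraph (Fin 22)).DecomposesInto (thetaGraph 2 2 7) :=
  decomp_of_lists (thetaGraph 2 2 7)
    ([(0,2), (2,1), (0,3), (3,1), (0,4), (4,5), (5,6), (6,7), (7,8), (8,9), (9,1)] : List (Fin (2+2+7-1) × Fin (2+2+7-1)))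
    (by decide)
    ([![21,14,10,20,0,7,1,9,11,6],
     ![19,3,17,7,2,18,5,16,9,6],
     ![7,19,15,10,17,11,12,3,2,0],
     ![21,15,11,14,1,8,2,10,12,0],
     ![20,4,18,8,3,19,6,17,10,0],
     ![8,20,16,11,18,12,13,4,3,1],
     ![21,16,12,15,2,9,3,11,13,1],
     ![14,5,19,9,4,20,0,18,11,1],
     ![9,14,17,12,19,13,7,5,4,2],
     ![21,17,13,16,3,10,4,12,7,2],
     ![15,6,20,10,5,14,1,19,12,2],
     ![10,15,18,13,20,7,8,6,5,3],
     ![21,18,7,17,4,11,5,13,8,3],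
     ![16,0,14,11,6,15,2,20,13,3],
     ![11,16,19,7,14,8,9,0,6,4],
     ![21,19,8,18,5,12,6,7,9,4],
     ![17,1,15,12,0,16,3,14,7,4],
     ![12,17,20,8,15,9,10,1,0,5],
     ![21,20,9,19,6,13,0,8,10,5],
     ![18,2,16,13,1,17,4,15,8,5],
     ![13,18,14,9,16,10,11,2,1,6]] : List (Fin (2+2+7-1) → Fin 22))
    (by decide) (by decide)


lemma d_236_11 : (⊤ : SimpleGraph (Fin 11)).DecomposesInto (thetaGraph 2 3 6) :=
  decomp_of_lists (thetaGraph 2 3 6)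
    ([(0,2), (2,1), (0,3), (3,4), (4,1), (0,5), (5,6), (6,7), (7,8), (8,9), (9,1)] : List (Fin (2+3+6-1) × Fin (2+3+6-1)))
    (by decide)
    ([![3,8,9,7,1,2,6,5,4,10],
     ![5,4,3,7,6,9,2,1,10,0],
     ![0,3,6,2,10,5,8,7,9,1],
     ![5,4,2,10,7,1,6,9,0,8],
     ![0,8,3,7,2,1,4,9,10,6]] : List (Fin (2+3+6-1) → Fin 11))
    (by decide) (by decide)


lemma d_236_12 : (⊤ : SimpleGraph (Fin 12)).DecomposesInto (thetaGraph 2 3 6) :=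
  decomp_of_lists (thetaGraph 2 3 6)
    ([(0,2), (2,1), (0,3), (3,4), (4,1), (0,5), (5,6), (6,7), (7,8), (8,9), (9,1)] : List (Fin (2+3+6-1) × Fin (2+3+6-1)))
    (by decide)
    ([![6,8,2,1,0,7,10,4,9,5],
     ![7,10,11,5,6,3,2,4,1,8],
     ![11,9,8,6,3,5,0,4,7,2],
     ![4,2,11,3,1,8,6,9,0,10],
     ![1,3,10,9,11,7,0,6,4,5],
     ![5,0,2,1,11,10,9,7,8,3]] : List (Fin (2+3+6-1) → Fin 12))
    (by decide) (by decide)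


lemma d_236_22 : (⊤ : SimpleGraph (Fin 22)).DecomposesInto (thetaGraph 2 3 6) :=
  decomp_of_lists (thetaGraph 2 3 6)
    ([(0,2), (2,1), (0,3), (3,4), (4,1), (0,5), (5,6), (6,7), (7,8), (8,9), (9,1)] : List (Fin (2+3+6-1) × Fin (2+3+6-1)))
    (by decide)
    ([![21,14,10,20,7,6,0,9,11,3],
     ![19,3,17,11,8,18,2,4,7,16],
     ![7,15,19,13,0,3,10,20,1,5],
     ![21,15,11,14,8,0,1,10,12,4],
     ![20,4,18,12,9,19,3,5,8,17],
     ![8,16,20,7,1,4,11,14,2,6],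
     ![21,16,12,15,9,1,2,11,13,5],
     ![14,5,19,13,10,20,4,6,9,18],
     ![9,17,14,8,2,5,12,15,3,0],
     ![21,17,13,16,10,2,3,12,7,6],
     ![15,6,20,7,11,14,5,0,10,19],
     ![10,18,15,9,3,6,13,16,4,1],
     ![21,18,7,17,11,3,4,13,8,0],
     ![16,0,14,8,12,15,6,1,11,20],
     ![11,19,16,10,4,0,7,17,5,2],
     ![21,19,8,18,12,4,5,7,9,1],
     ![17,1,15,9,13,16,0,2,12,14],
     ![12,20,17,11,5,1,8,18,6,3],
     ![21,20,9,19,13,5,6,8,10,2],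
     ![18,2,16,10,7,17,1,3,13,15],
     ![13,14,18,12,6,2,9,19,0,4]] : List (Fin (2+3+6-1) → Fin 22))
    (by decide) (by decide)


lemma d_245_11 : (⊤ : SimpleGraph (Fin 11)).DecomposesInto (thetaGraph 2 4 5) :=
  decomp_of_lists (thetaGraph 2 4 5)
    ([(0,2), (2,1), (0,3), (3,4), (4,5), (5,1), (0,6), (6,7), (7,8), (8,9), (9,1)] : List (Fin (2+4+5-1) × Fin (2+4+5-1)))
    (by decide)
    ([![3,2,6,8,0,5,4,7,9,10],
     ![2,1,9,0,6,4,8,10,5,7],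
     ![4,7,0,10,1,6,8,5,9,3],
     ![7,3,2,8,9,0,10,6,5,1],
     ![4,1,2,9,6,8,5,3,10,0]] : List (Fin (2+4+5-1) → Fin 11))
    (by decide) (by decide)


lemma d_245_12 : (⊤ : SimpleGraph (Fin 12)).DecomposesInto (thetaGraph 2 4 5) :=
  decomp_of_lists (thetaGraph 2 4 5)
    ([(0,2), (2,1), (0,3), (3,4), (4,5), (5,1), (0,6), (6,7), (7,8), (8,9), (9,1)] : List (Fin (2+4+5-1) × Fin (2+4+5-1)))
    (by decide)
    ([![0,7,3,4,11,10,1,6,8,2],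
     ![4,9,8,2,6,0,5,10,3,1],
     ![10,11,9,0,5,6,4,7,8,1],
     ![3,6,4,11,7,9,2,5,1,10],
     ![8,2,10,11,5,9,3,6,7,0],
     ![1,5,7,4,9,3,2,11,0,8]] : List (Fin (2+4+5-1) → Fin 12))
    (by decide) (by decide)


lemma d_245_22 : (⊤ : SimpleGraph (Fin 22)).DecomposesInto (thetaGraph 2 4 5) :=
  decomp_of_lists (thetaGraph 2 4 5)
    ([(0,2), (2,1), (0,3), (3,4), (4,5), (5,1), (0,6), (6,7), (7,8), (8,9), (9,1)] : List (Fin (2+4+5-1) × Fin (2+4+5-1)))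
    (by decide)
    ([![21,14,10,20,7,6,0,9,11,4],
     ![19,3,17,11,18,5,10,20,14,9],
     ![7,14,3,2,1,5,10,9,6,18],
     ![21,15,11,14,8,0,1,10,12,5],
     ![20,4,18,12,19,6,11,14,15,10],
     ![8,15,4,3,2,6,11,10,0,19],
     ![21,16,12,15,9,1,2,11,13,6],
     ![14,5,19,13,20,0,12,15,16,11],
     ![9,16,5,4,3,0,12,11,1,20],
     ![21,17,13,16,10,2,3,12,7,0],
     ![15,6,20,7,14,1,13,16,17,12],
     ![10,17,6,5,4,1,13,12,2,14],
     ![21,18,7,17,11,3,4,13,8,1],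
     ![16,0,14,8,15,2,7,17,18,13],
     ![11,18,0,6,5,2,7,13,3,15],
     ![21,19,8,18,12,4,5,7,9,2],
     ![17,1,15,9,16,3,8,18,19,7],
     ![12,19,1,0,6,3,8,7,4,16],
     ![21,20,9,19,13,5,6,8,10,3],
     ![18,2,16,10,17,4,9,19,20,8],
     ![13,20,2,1,0,4,9,8,5,17]] : List (Fin (2+4+5-1) → Fin 22))
    (by decide) (by decide)


lemma d_335_11 : (⊤ : SimpleGraph (Fin 11)).DecomposesInto (thetaGraph 3 3 5) :=
  decomp_of_lists (thetaGraph 3 3 5)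
    ([(0,2), (2,3), (3,1), (0,4), (4,5), (5,1), (0,6), (6,7), (7,8), (8,9), (9,1)] : List (Fin (3+3+5-1) × Fin (3+3+5-1)))
    (by decide)
    ([![9,1,2,0,8,6,3,7,5,4],
     ![9,3,4,8,5,1,10,0,6,2],
     ![10,1,4,2,6,9,7,0,5,8],
     ![10,7,2,8,5,6,3,4,0,9],
     ![3,7,5,2,6,4,0,8,10,1]] : List (Fin (3+3+5-1) → Fin 11))
    (by decide) (by decide)


lemma d_335_12 : (⊤ : SimpleGraph (Fin 12)).DecomposesInto (thetaGraph 3 3 5) :=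
  decomp_of_lists (thetaGraph 3 3 5)
    ([(0,2), (2,3), (3,1), (0,4), (4,5), (5,1), (0,6), (6,7), (7,8), (8,9), (9,1)] : List (Fin (3+3+5-1) × Fin (3+3+5-1)))
    (by decide)
    ([![4,5,8,0,9,1,6,11,3,2],
     ![1,11,4,2,6,9,10,8,3,7],
     ![10,8,6,7,4,11,0,1,3,5],
     ![6,7,8,1,3,0,2,9,10,5],
     ![0,9,6,5,4,7,11,10,2,8],
     ![3,2,10,7,9,0,4,5,11,1]] : List (Fin (3+3+5-1) → Fin 12))
    (by decide) (by decide)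


lemma d_344_11 : (⊤ : SimpleGraph (Fin 11)).DecomposesInto (thetaGraph 3 4 4) :=
  decomp_of_lists (thetaGraph 3 4 4)
    ([(0,2), (2,3), (3,1), (0,4), (4,5), (5,6), (6,1), (0,7), (7,8), (8,9), (9,1)] : List (Fin (3+4+4-1) × Fin (3+4+4-1)))
    (by decide)
    ([![10,4,3,7,1,0,9,8,5,2],
     ![2,5,6,0,3,8,9,1,7,10],
     ![10,5,9,7,6,3,4,0,8,1],
     ![4,6,1,9,8,2,7,0,3,5],
     ![2,6,10,4,0,7,8,9,3,1]] : List (Fin (3+4+4-1) → Fin 11))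
    (by decide) (by decide)


lemma d_344_12 : (⊤ : SimpleGraph (Fin 12)).DecomposesInto (thetaGraph 3 4 4) :=
  decomp_of_lists (thetaGraph 3 4 4)
    ([(0,2), (2,3), (3,1), (0,4), (4,5), (5,6), (6,1), (0,7), (7,8), (8,9), (9,1)] : List (Fin (3+4+4-1) × Fin (3+4+4-1)))
    (by decide)
    ([![6,3,1,4,8,10,0,7,11,2],
     ![8,4,11,10,5,2,7,9,0,6],
     ![2,0,9,7,6,3,8,4,5,1],
     ![11,1,3,9,0,2,8,6,5,10],
     ![10,5,3,7,9,4,0,2,1,11],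
     ![7,9,10,6,1,3,5,8,4,11]] : List (Fin (3+4+4-1) → Fin 12))
    (by decide) (by decide)


lemma d_344_22 : (⊤ : SimpleGraph (Fin 22)).DecomposesInto (thetaGraph 3 4 4) :=
  decomp_of_lists (thetaGraph 3 4 4)
    ([(0,2), (2,3), (3,1), (0,4), (4,5), (5,6), (6,1), (0,7), (7,8), (8,9), (9,1)] : List (Fin (3+4+4-1) × Fin (3+4+4-1)))
    (by decide)
    ([![21,11,10,14,0,7,1,19,18,6],
     ![19,11,17,3,2,18,12,16,5,0],
     ![3,11,18,13,2,6,19,12,14,7],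
     ![21,12,11,15,1,8,2,20,19,0],
     ![20,12,18,4,3,19,13,17,6,1],
     ![4,12,19,7,3,0,20,13,15,8],
     ![21,13,12,16,2,9,3,14,20,1],
     ![14,13,19,5,4,20,7,18,0,2],
     ![5,13,20,8,4,1,14,7,16,9],
     ![21,7,13,17,3,10,4,15,14,2],
     ![15,7,20,6,5,14,8,19,1,3],
     ![6,7,14,9,5,2,15,8,17,10],
     ![21,8,7,18,4,11,5,16,15,3],
     ![16,8,14,0,6,15,9,20,2,4],
     ![0,8,15,10,6,3,16,9,18,11],
     ![21,9,8,19,5,12,6,17,16,4],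
     ![17,9,15,1,0,16,10,14,3,5],
     ![1,9,16,11,0,4,17,10,19,12],
     ![21,10,9,20,6,13,0,18,17,5],
     ![18,10,16,2,1,17,11,15,4,6],
     ![2,10,17,12,1,5,18,11,20,13]] : List (Fin (3+4+4-1) → Fin 22))
    (by decide) (by decide)


theorem theta11_designs (a b c : ℕ) (ha : 1 ≤ a) (hab : a ≤ b) (hbc : b ≤ c)
    (hb : 2 ≤ b) (habc : a + b + c = 11) :
    ((thetaGraph a b c).HasDesign 11 ∧ (thetaGraph a b c).HasDesign 12) ∧
    (¬(Odd a ∧ Odd b ∧ Odd c) →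
      (thetaGraph a b c).HasDesign 22) := by
  have hcases : (a = 1 ∧ b = 2 ∧ c = 8) ∨ (a = 1 ∧ b = 3 ∧ c = 7) ∨ (a = 1 ∧ b = 4 ∧ c = 6) ∨ (a = 1 ∧ b = 5 ∧ c = 5) ∨ (a = 2 ∧ b = 2 ∧ c = 7) ∨ (a = 2 ∧ b = 3 ∧ c = 6) ∨ (a = 2 ∧ b = 4 ∧ c = 5) ∨ (a = 3 ∧ b = 3 ∧ c = 5) ∨ (a = 3 ∧ b = 4 ∧ c = 4) := by omega
  rcases hcases with ⟨rfl, rfl, rfl⟩ | ⟨rfl, rfl, rfl⟩ | ⟨rfl, rfl, rfl⟩ | ⟨rfl, rfl, rfl⟩ | ⟨rfl, rfl, rfl⟩ | ⟨rfl, rfl, rfl⟩ | ⟨rfl, rfl, rfl⟩ | ⟨rfl, rfl, rfl⟩ | ⟨rfl, rfl, rfl⟩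
  · exact ⟨⟨d_128_11, d_128_12⟩, fun _ => d_128_22⟩
  · exact ⟨⟨d_137_11, d_137_12⟩, fun h => absurd ⟨⟨0, by norm_num⟩, ⟨1, by norm_num⟩, ⟨3, by norm_num⟩⟩ h⟩
  · exact ⟨⟨d_146_11, d_146_12⟩, fun _ => d_146_22⟩
  · exact ⟨⟨d_155_11, d_155_12⟩, fun h => absurd ⟨⟨0, by norm_num⟩, ⟨2, by norm_num⟩, ⟨2, by norm_num⟩⟩ h⟩
  · exact ⟨⟨d_227_11, d_227_12⟩, fun _ => d_227_22⟩
  · exact ⟨⟨d_236_11, d_236_12⟩, fun _ => d_236_22⟩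
  · exact ⟨⟨d_245_11, d_245_12⟩, fun _ => d_245_22⟩
  · exact ⟨⟨d_335_11, d_335_12⟩, fun h => absurd ⟨⟨1, by norm_num⟩, ⟨1, by norm_num⟩, ⟨2, by norm_num⟩⟩ h⟩
  · exact ⟨⟨d_344_11, d_344_12⟩, fun _ => d_344_22⟩
end
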